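/- arXiv:2211.16545 — 14 statements merged into one kernel-verified Lean document; each statement's English description precedes it below -/
import Mathlib

section
/- Let X be a Tychonoff (completely regular Hausdorff) realcompact space and let A be a subset of X whose closure in X is not compact. Then A contains a countably infinite subset N that is closed in X, discrete, and C-embedded in X. -/
open Set Topology

universe u

/-- A topological space is *realcompact* if it admits a closed embedding into a power
of the real line. -/
def Realcompact (X : Type u) [TopologicalSpace X] : Prop :=
  ∃ (ι : Type u) (f : X → ι → ℝ), Topology.IsClosedEmbedding f
/-- A subset `A` of a topological space `X` is *C-embedded* if every continuous
real-valued function on `A` extends to a continuous real-valued function on `X`. -/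
def CEmbedded {X : Type*} [TopologicalSpace X] (A : Set X) : Prop :=
  ∀ f : C(A, ℝ), ∃ g : C(X, ℝ), ∀ a : A, g ↑a = f a

/-- A subset `A` of a topological space `X` is *C*-embedded* if every *bounded* continuous
real-valued function on `A` extends to a continuous real-valued function on `X`. -/
def CstarEmbedded {X : Type*} [TopologicalSpace X] (A : Set X) : Prop :=
  ∀ f : C(A, ℝ), (∃ M : ℝ, ∀ a : A, |f a| ≤ M) → ∃ g : C(X, ℝ), ∀ a : A, g ↑a = f a

/-- The range of a `1`-separated sequence in `ℝ` is closed. -/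
lemma sep_isClosed_range {t : ℕ → ℝ} (hsep : ∀ m n : ℕ, m ≠ n → 1 ≤ |t m - t n|) :
    IsClosed (Set.range t) := by
  rw [← closure_subset_iff_isClosed]
  intro x hx
  obtain ⟨b0, hb0, hb0d⟩ := Metric.mem_closure_iff.mp hx (1/2) (by norm_num)
  obtain ⟨k, rfl⟩ := hb0
  have hε : ∀ ε > (0:ℝ), dist x (t k) < ε := by
    intro ε hεpos
    obtain ⟨b, hb, hbd⟩ := Metric.mem_closure_iff.mp hx (min ε (1/2))
      (lt_min hεpos (by norm_num))
    obtain ⟨n, rfl⟩ := hb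
    have hnk : n = k := by
      by_contra hne
      have h1 := hsep n k hne
      rw [← Real.dist_eq] at h1
      have h2 : dist (t n) (t k) ≤ dist (t n) x + dist x (t k) := dist_triangle _ _ _
      have h3 : dist (t n) x < 1/2 := by
        rw [dist_comm]; exact lt_of_lt_of_le hbd (min_le_right _ _)
      linarith
    subst hnk
    exact lt_of_lt_of_le hbd (min_le_left _ _)
  have hx0 : x = t k := by
    by_contra hne
    exact absurd (hε (dist x (t k)) (dist_pos.mpr hne)) (lt_irrefl _)
  exact hx0 ▸ Set.mem_range_self k

/-- If a sequence `a` in a `T1` space is mapped by a continuous real-valued map to a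
`1`-separated sequence, then its range is closed and discrete. -/
lemma key_closed_discrete {X : Type*} [TopologicalSpace X] [T1Space X] {f : X → ℝ}
    (hf : Continuous f) {a : ℕ → X} {t : ℕ → ℝ} (hta : ∀ n, f (a n) = t n)
    (hsep : ∀ m n : ℕ, m ≠ n → 1 ≤ |t m - t n|) :
    IsClosed (Set.range a) ∧ DiscreteTopology (Set.range a) := by
  have hclt : IsClosed (Set.range t) := sep_isClosed_range hsep
  have hiso : ∀ k : ℕ, (f ⁻¹' Metric.ball (t k) (1/2)) ∩ Set.range a ⊆ {a k} := by
    rintro k y ⟨hy1, ⟨n, rfl⟩⟩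
    have hd : dist (t n) (t k) < 1/2 := by
      rw [← hta n]; exact hy1
    have hnk : n = k := by
      by_contra hne
      have h1 := hsep n k hne
      rw [← Real.dist_eq] at h1
      linarith
    simp [hnk]
  constructor
  · rw [← closure_subset_iff_isClosed]
    intro x hx
    have hfx : f x ∈ Set.range t := by
      have h1 : f x ∈ closure (Set.range t) :=
        map_mem_closure hf hx (by rintro _ ⟨n, rfl⟩; exact hta n ▸ Set.mem_range_self n)
      rwa [hclt.closure_eq] at h1
    obtain ⟨k, hk⟩ := hfx
    have hU : IsOpen (f ⁻¹' Metric.ball (t k) (1/2)) := Metric.isOpen_ball.preimage hf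
    have hxU : x ∈ f ⁻¹' Metric.ball (t k) (1/2) := by
      simp [Set.mem_preimage, Metric.mem_ball, hk]
    have hxk : x ∈ closure ({a k} : Set X) := by
      rw [mem_closure_iff]
      intro o ho hxo
      obtain ⟨y, ⟨hyo, hyU⟩, hyN⟩ := mem_closure_iff.mp hx (o ∩ _) (ho.inter hU) ⟨hxo, hxU⟩
      have hy : y = a k := hiso k ⟨hyU, hyN⟩
      exact ⟨a k, hy ▸ hyo, rfl⟩
    rw [closure_singleton] at hxk
    exact hxk ▸ Set.mem_range_self k
  · rw [discreteTopology_subtype_iff]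
    intro x hx
    rw [Filter.inf_principal_eq_bot]
    obtain ⟨k, rfl⟩ := hx
    refine mem_nhdsWithin.mpr ⟨f ⁻¹' Metric.ball (t k) (1/2),
      Metric.isOpen_ball.preimage hf, ?_, ?_⟩
    · simp [Set.mem_preimage, Metric.mem_ball, hta k]
    · rintro y ⟨hyU, hyne⟩ hyN
      exact hyne (hiso k ⟨hyU, hyN⟩)

/-- In a Tychonoff realcompact space `X`, every subset `A` whose closure is
not compact contains a countably infinite subset that is closed in `X`, discrete, and
C-embedded in `X`. -/
theorem statement0 {X : Type u} [TopologicalSpace X] [T2Space X] [CompletelyRegularSpace X]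
    (hX : Realcompact X) (A : Set X) (hA : ¬ IsCompact (closure A)) :
    ∃ N : Set X, N ⊆ A ∧ N.Countable ∧ N.Infinite ∧ IsClosed N ∧ DiscreteTopology N ∧
      CEmbedded N := by
  obtain ⟨ι, e, he⟩ := hX
  -- Step 1: a continuous coordinate unbounded on A
  have hunb : ∃ i : ι, ∀ M : ℝ, ∃ x ∈ A, M < |e x i| := by
    by_contra h
    push_neg at h
    choose M hM using h
    have hM' : ∀ i, ∀ x ∈ closure A, |e x i| ≤ M i := by
      intro i
      have hcl : closure A ⊆ {x | |e x i| ≤ M i} :=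
        closure_minimal (hM i)
          (isClosed_le (((continuous_apply i).comp he.continuous).abs) continuous_const)
      exact fun x hx => hcl hx
    apply hA
    rw [he.isEmbedding.isCompact_iff]
    refine IsCompact.of_isClosed_subset
      (isCompact_univ_pi (fun i => isCompact_Icc (a := -(M i)) (b := M i)))
      (he.isClosedMap _ isClosed_closure) ?_
    rintro _ ⟨x, hx, rfl⟩ i _
    exact abs_le.mp (hM' i x hx)
  obtain ⟨i, hi⟩ := hunb
  set f : X → ℝ := fun x => e x i with hfdef
  have hfc : Continuous f := (continuous_apply i).comp he.continuous
  choose c hcA hcM using hi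
  -- Step 2: recursively chosen points with separated values
  let a : ℕ → X := fun n => Nat.rec (c 0) (fun _ x => c (|f x| + 1)) n
  have haS : ∀ n, a (n + 1) = c (|f (a n)| + 1) := fun n => rfl
  set t : ℕ → ℝ := fun n => f (a n) with htdef
  have htstep : ∀ n, |t n| + 1 < |t (n + 1)| := by
    intro n
    have := hcM (|f (a n)| + 1)
    rw [← haS n] at this
    exact this
  have hmono : ∀ m n, m < n → |t m| + 1 ≤ |t n| := by
    intro m n h
    induction n with
    | zero => omega
    | succ n ih =>
      rcases Nat.lt_succ_iff_lt_or_eq.mp h with h' | h'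
      · have h1 := ih h'
        have h2 := htstep n
        linarith [abs_nonneg (t n)]
      · subst h'
        exact le_of_lt (htstep m)
  have hsep : ∀ m n : ℕ, m ≠ n → 1 ≤ |t m - t n| := by
    intro m n hmn
    rcases Nat.lt_or_ge m n with h | h
    · have h1 := hmono m n h
      have h2 := abs_sub_abs_le_abs_sub (t n) (t m)
      rw [abs_sub_comm]
      linarith
    · have h' : n < m := lt_of_le_of_ne h (Ne.symm hmn)
      have h1 := hmono n m h'
      have h2 := abs_sub_abs_le_abs_sub (t m) (t n)
      linarith
  have htinj : Function.Injective t := by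
    intro m n hmn
    by_contra hne
    have := hsep m n hne
    rw [hmn, sub_self, abs_zero] at this
    linarith
  have hainj : Function.Injective a := fun m n h => htinj (by simp [htdef, h])
  have hta : ∀ n, f (a n) = t n := fun n => rfl
  obtain ⟨hNclosed, hNdisc⟩ := key_closed_discrete hfc hta hsep
  have hNA : Set.range a ⊆ A := by
    rintro _ ⟨n, rfl⟩
    cases n with
    | zero => exact hcA 0
    | succ n => rw [haS n]; exact hcA _
  refine ⟨Set.range a, hNA, Set.countable_range a, Set.infinite_range_of_injective hainj,
    hNclosed, hNdisc, ?_⟩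
  -- Step 3: C-embedding via Tietze extension on ℝ
  intro g
  obtain ⟨-, hTdisc⟩ := key_closed_discrete continuous_id (fun n => rfl) hsep
  haveI := hTdisc
  have hclt : IsClosed (Set.range t) := sep_isClosed_range hsep
  set g' : C((Set.range t : Set ℝ), ℝ) :=
    ⟨fun s => g ⟨a s.2.choose, Set.mem_range_self _⟩, continuous_of_discreteTopology⟩ with hg'
  obtain ⟨h, hh⟩ := g'.exists_restrict_eq hclt
  refine ⟨h.comp ⟨f, hfc⟩, ?_⟩
  intro x
  obtain ⟨n, hn⟩ := x.2
  have hgoal : h (f ↑x) = g x := by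
    rw [← hn, hta n]
    have h1 : h.restrict (Set.range t) ⟨t n, Set.mem_range_self n⟩ =
        g' ⟨t n, Set.mem_range_self n⟩ := DFunLike.congr_fun hh _
    rw [ContinuousMap.restrict_apply] at h1
    rw [h1]
    have hspec : t (Set.mem_range_self (f := t) n).choose = t n :=
      (Set.mem_range_self (f := t) n).choose_spec
    have hm : (Set.mem_range_self (f := t) n).choose = n := htinj hspec
    show g ⟨a (Set.mem_range_self (f := t) n).choose, _⟩ = g x
    congr 1
    exact Subtype.ext (by rw [hm]; exact hn)
  exact hgoal
end

section
/- Let X be a Tychonoff (completely regular Hausdorff) space and let N₁ and N₂ be closed copies of ℕ in X, each of which is C-embedded in X. Then N₁ ∪ N₂ is C-embedded in X. -/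
open Set Topology

/-- `N` is a *closed copy of ℕ* in `X`: a countably infinite closed subset all of whose
points are isolated in the subspace topology. -/
def ClosedCopyOfNat {X : Type*} [TopologicalSpace X] (N : Set X) : Prop :=
  N.Countable ∧ N.Infinite ∧ IsClosed N ∧ DiscreteTopology N

/-- Removing any set from a closed discrete set yields a closed set. -/
lemma aux_diff_closed {X : Type*} [TopologicalSpace X] {A B : Set X}
    (hA : IsClosed A) (hd : DiscreteTopology A) : IsClosed (A \ B) := by
  rw [← closure_subset_iff_isClosed]
  intro x hx
  have hxA : x ∈ A := hA.closure_subset (closure_mono diff_subset hx)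
  have hsing : IsOpen ({⟨x, hxA⟩} : Set ↑A) := isOpen_discrete _
  obtain ⟨U, hU, hUeq⟩ := isOpen_induced_iff.mp hsing
  have hxU : x ∈ U := by
    have : (⟨x, hxA⟩ : ↑A) ∈ Subtype.val ⁻¹' U := hUeq ▸ rfl
    exact this
  obtain ⟨y, hyU, hyD⟩ := mem_closure_iff.mp hx U hU hxU
  have : (⟨y, hyD.1⟩ : ↑A) ∈ Subtype.val ⁻¹' U := hyU
  rw [hUeq] at this
  have hyx : y = x := congrArg Subtype.val this
  exact hyx ▸ hyD

/-- Given a closed set `D` and a countable set `N` disjoint from it in a completely regular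
space, there is a continuous function vanishing on `D` and nonzero on `N`. -/
lemma aux_sep {X : Type*} [TopologicalSpace X] [CompletelyRegularSpace X]
    {D N : Set X} (hD : IsClosed D) (hN : N.Countable) (hdisj : ∀ x ∈ N, x ∉ D) :
    ∃ k : C(X, ℝ), (∀ x ∈ D, k x = 0) ∧ (∀ x ∈ N, k x ≠ 0) := by
  rcases N.eq_empty_or_nonempty with hNe | hNe
  · exact ⟨0, fun x _ => rfl, by simp [hNe]⟩
  obtain ⟨b, hb⟩ := Set.Countable.exists_eq_range hN hNe
  choose φ hφc hφ0 hφ1 using fun n =>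
    CompletelyRegularSpace.completely_regular (b n) D hD (hdisj (b n) (hb ▸ mem_range_self n))
  set F : ℕ → X → ℝ := fun n x => (1 / 2) ^ n * (1 - (φ n x : ℝ)) with hF
  have hmem : ∀ n x, (0 : ℝ) ≤ 1 - (φ n x : ℝ) ∧ 1 - (φ n x : ℝ) ≤ 1 := by
    intro n x
    constructor
    · linarith [(φ n x).2.2]
    · linarith [(φ n x).2.1]
  have hFnonneg : ∀ n x, 0 ≤ F n x := fun n x =>
    mul_nonneg (by positivity) (hmem n x).1
  have hFle : ∀ n x, ‖F n x‖ ≤ (1 / 2 : ℝ) ^ n := by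
    intro n x
    rw [Real.norm_eq_abs, abs_of_nonneg (hFnonneg n x)]
    calc (1 / 2 : ℝ) ^ n * (1 - (φ n x : ℝ)) ≤ (1 / 2) ^ n * 1 :=
          mul_le_mul_of_nonneg_left (hmem n x).2 (by positivity)
      _ = (1 / 2) ^ n := mul_one _
  have hFc : ∀ n, Continuous (F n) := fun n =>
    continuous_const.mul (continuous_const.sub (continuous_subtype_val.comp (hφc n)))
  have hcont : Continuous fun x => ∑' n, F n x :=
    continuous_tsum hFc summable_geometric_two (fun n x => hFle n x)
  have hsumm : ∀ x, Summable fun n => F n x := fun x =>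
    Summable.of_nonneg_of_le (fun n => hFnonneg n x)
      (fun n => by
        have h := hFle n x
        rwa [Real.norm_eq_abs, abs_of_nonneg (hFnonneg n x)] at h) summable_geometric_two
  refine ⟨⟨fun x => ∑' n, F n x, hcont⟩, ?_, ?_⟩
  · intro x hx
    have : ∀ n, F n x = 0 := by
      intro n
      have : φ n x = 1 := hφ1 n hx
      simp [hF, this]
    simp [this]
  · intro x hx
    rw [hb] at hx
    obtain ⟨m, rfl⟩ := hx
    have hpos : (0 : ℝ) < F m (b m) := by
      have : φ m (b m) = 0 := hφ0 m
      simp only [hF, this]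
      norm_num
    have hle : F m (b m) ≤ ∑' n, F n (b m) :=
      Summable.le_tsum (hsumm (b m)) m (fun i _ => hFnonneg i (b m))
    exact ne_of_gt (lt_of_lt_of_le hpos hle)

/-- In a Tychonoff space, the union of two C-embedded closed copies of `ℕ`
is C-embedded. -/
theorem statement1 {X : Type*} [TopologicalSpace X] [T2Space X] [CompletelyRegularSpace X]
    {N₁ N₂ : Set X} (h₁ : ClosedCopyOfNat N₁) (h₂ : ClosedCopyOfNat N₂)
    (hc₁ : CEmbedded N₁) (hc₂ : CEmbedded N₂) :
    CEmbedded (N₁ ∪ N₂) := by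
  obtain ⟨-, -, hN₁c, hN₁d⟩ := h₁
  obtain ⟨hN₂cnt, -, -, hN₂d⟩ := h₂
  intro f
  -- extend f restricted to N₁
  obtain ⟨g₁, hg₁⟩ :=
    hc₁ ⟨fun a => f ⟨a.1, Or.inl a.2⟩, continuous_of_discreteTopology⟩
  -- D = N₁ \ N₂ is closed
  have hD : IsClosed (N₁ \ N₂) := aux_diff_closed hN₁c hN₁d
  obtain ⟨k, hk0, hkne⟩ := aux_sep hD hN₂cnt (fun x hx hxD => hxD.2 hx)
  -- extend the correction over N₂
  obtain ⟨G, hG⟩ :=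
    hc₂ ⟨fun b => (f ⟨b.1, Or.inr b.2⟩ - g₁ b.1) / k b.1, continuous_of_discreteTopology⟩
  refine ⟨⟨fun x => g₁ x + k x * G x, by continuity⟩, ?_⟩
  rintro ⟨a, ha⟩
  by_cases hb : a ∈ N₂
  · have hGa := hG ⟨a, hb⟩
    simp only [ContinuousMap.coe_mk] at hGa ⊢
    rw [hGa, mul_div_cancel₀ _ (hkne a hb)]
    ring_nf
  · have ha1 : a ∈ N₁ := ha.resolve_right hb
    have hka : k a = 0 := hk0 a ⟨ha1, hb⟩
    have hg := hg₁ ⟨a, ha1⟩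
    simp only [ContinuousMap.coe_mk] at hg ⊢
    rw [hka, zero_mul, add_zero, hg]
end

section
/- Let X be a Tychonoff (completely regular Hausdorff) space, let N₁ be a closed copy of ℕ in X that is C-embedded in X, and let N₂ be a closed copy of ℕ in X that is C*-embedded in X. Then N₁ ∪ N₂ is C*-embedded in X. -/
open Set Topology

/-- Any real-valued function on a subset of a discrete C-embedded set extends. -/
lemma extend_of_cEmbedded {X : Type*} [TopologicalSpace X] {N A : Set X}
    (hN : DiscreteTopology N) (hc : CEmbedded N) (hA : A ⊆ N) (f : X → ℝ) :
    ∃ g : C(X, ℝ), ∀ a ∈ A, g a = f a := by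
  haveI := hN
  obtain ⟨g, hg⟩ := hc ⟨fun x => A.indicator f ↑x, continuous_of_discreteTopology⟩
  refine ⟨g, fun a ha => ?_⟩
  simpa [Set.indicator_of_mem ha] using hg ⟨a, hA ha⟩

/-- A countable set with the extension property is completely separated from any
disjoint closed set. -/
lemma sep_lemma {X : Type*} [TopologicalSpace X] [CompletelyRegularSpace X]
    {E F : Set X} (hEc : E.Countable)
    (hext : ∀ f : X → ℝ, ∃ g : C(X, ℝ), ∀ a ∈ E, g a = f a)
    (hF : IsClosed F) (hdisj : ∀ e ∈ E, e ∉ F) :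
    ∃ ψ : C(X, ℝ), (∀ x, ψ x ∈ Icc (0:ℝ) 1) ∧ (∀ e ∈ E, ψ e = 1) ∧ (∀ y ∈ F, ψ y = 0) := by
  haveI : Countable ↥E := hEc.to_subtype
  obtain ⟨ι, hι⟩ := Countable.exists_injective_nat ↥E
  choose c hc hc0 hc1 using fun e : ↥E =>
    CompletelyRegularSpace.completely_regular (↑e) F hF (hdisj ↑e e.2)
  -- the bump functions
  set fe : ↥E → X → ℝ := fun e x => 1 - ((c e x : ℝ)) with hfe
  have hfe_cont : ∀ e, Continuous (fe e) :=
    fun e => continuous_const.sub ((continuous_subtype_val).comp (hc e))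
  have hfe_mem : ∀ e x, fe e x ∈ Icc (0:ℝ) 1 := by
    intro e x
    have h1 := (c e x).2.1
    have h2 := (c e x).2.2
    constructor <;> simp [hfe] <;> linarith
  have hfe_self : ∀ e : ↥E, fe e ↑e = 1 := by
    intro e; simp [hfe, hc0 e]
  have hfe_F : ∀ (e : ↥E) (y : X), y ∈ F → fe e y = 0 := by
    intro e y hy
    have := hc1 e hy
    simp [hfe, show c e y = 1 from this]
  -- summable weights
  have hgeo : Summable (fun n : ℕ => ((1:ℝ)/2)^n) :=
    summable_geometric_of_lt_one (by norm_num) (by norm_num)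
  have hsum : Summable (fun e : ↥E => ((1:ℝ)/2)^(ι e)) := hgeo.comp_injective hι
  set s : X → ℝ := fun x => ∑' e : ↥E, ((1:ℝ)/2)^(ι e) * fe e x with hs
  have hterm_nonneg : ∀ (e : ↥E) (x : X), 0 ≤ ((1:ℝ)/2)^(ι e) * fe e x := by
    intro e x
    exact mul_nonneg (by positivity) (hfe_mem e x).1
  have hterm_le : ∀ (e : ↥E) (x : X), ((1:ℝ)/2)^(ι e) * fe e x ≤ ((1:ℝ)/2)^(ι e) := by
    intro e x
    nth_rewrite 2 [← mul_one (((1:ℝ)/2)^(ι e))]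
    exact mul_le_mul_of_nonneg_left (hfe_mem e x).2 (by positivity)
  have hsummable : ∀ x : X, Summable (fun e : ↥E => ((1:ℝ)/2)^(ι e) * fe e x) := by
    intro x
    exact Summable.of_nonneg_of_le (fun e => hterm_nonneg e x) (fun e => hterm_le e x) hsum
  have hs_cont : Continuous s := by
    apply continuous_tsum (fun e => (continuous_const.mul (hfe_cont e))) hsum
    intro e x
    rw [Real.norm_eq_abs, Pi.mul_apply, abs_of_nonneg (hterm_nonneg e x)]
    exact hterm_le e x
  have hs_nonneg : ∀ x, 0 ≤ s x := fun x => tsum_nonneg (fun e => hterm_nonneg e x)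
  have hs_pos : ∀ e : ↥E, 0 < s ↑e := by
    intro e
    have hle : ((1:ℝ)/2)^(ι e) * fe e ↑e ≤ s ↑e :=
      Summable.le_tsum (hsummable ↑e) e (fun j _ => hterm_nonneg j ↑e)
    rw [hfe_self e, mul_one] at hle
    exact lt_of_lt_of_le (by positivity) hle
  have hs_F : ∀ y ∈ F, s y = 0 := by
    intro y hy
    have : (fun e : ↥E => ((1:ℝ)/2)^(ι e) * fe e y) = fun _ => 0 := by
      funext e; rw [hfe_F e y hy, mul_zero]
    rw [hs]; simp only [this]; exact tsum_zero
  -- extend the reciprocal of s from E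
  obtain ⟨g, hg⟩ := hext (fun x => (s x)⁻¹)
  refine ⟨⟨fun x => min 1 (max 0 (s x * g x)), by fun_prop⟩, ?_, ?_, ?_⟩
  · intro x
    simp only [ContinuousMap.coe_mk]
    exact ⟨le_min zero_le_one (le_max_left _ _), min_le_left _ _⟩
  · intro e he
    have : s e * g e = 1 := by
      rw [hg e he]
      exact mul_inv_cancel₀ (ne_of_gt (hs_pos ⟨e, he⟩))
    simp [this]
  · intro y hy
    simp [hs_F y hy]

/-- In a Tychonoff space, the union of a C-embedded closed copy of `ℕ` and a
C*-embedded closed copy of `ℕ` is C*-embedded. -/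
theorem statement2 {X : Type*} [TopologicalSpace X] [T2Space X] [CompletelyRegularSpace X]
    {N₁ N₂ : Set X} (h₁ : ClosedCopyOfNat N₁) (h₂ : ClosedCopyOfNat N₂)
    (hc₁ : CEmbedded N₁) (hc₂ : CstarEmbedded N₂) :
    CstarEmbedded (N₁ ∪ N₂) := by
  obtain ⟨h1c, h1i, h1cl, h1d⟩ := h₁
  obtain ⟨h2c, h2i, h2cl, h2d⟩ := h₂
  haveI := h1d; haveI := h2d
  intro f hfbd
  obtain ⟨M, hM⟩ := hfbd
  -- Step 1: the function W, equal to 1 on N₁ ∩ N₂ and 0 on N₂ \ N₁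
  obtain ⟨W₀, hW₀⟩ := hc₂ ⟨fun y => N₁.indicator (fun _ => (1:ℝ)) ↑y,
      continuous_of_discreteTopology⟩ (by
    refine ⟨1, fun y => ?_⟩
    by_cases h : (y : X) ∈ N₁ <;> simp [Set.indicator_apply, h])
  set W : X → ℝ := fun x => min 1 (max 0 (W₀ x)) with hW
  have hW_cont : Continuous W := by fun_prop
  have hW_mem : ∀ x, W x ∈ Icc (0:ℝ) 1 := by
    intro x
    constructor
    · simp only [hW, le_min_iff]; exact ⟨zero_le_one, le_max_left _ _⟩
    · exact min_le_left _ _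
  have hW_one : ∀ x, x ∈ N₁ → x ∈ N₂ → W x = 1 := by
    intro x hx1 hx2
    have := hW₀ ⟨x, hx2⟩
    simp only [ContinuousMap.coe_mk] at this
    rw [Set.indicator_of_mem hx1] at this
    simp [hW, this]
  have hW_zero : ∀ x, x ∉ N₁ → x ∈ N₂ → W x = 0 := by
    intro x hx1 hx2
    have := hW₀ ⟨x, hx2⟩
    simp only [ContinuousMap.coe_mk] at this
    rw [Set.indicator_of_notMem hx1] at this
    simp [hW, this]
  -- Step 2: the function ψ, equal to 1 on N₁ \ N₂ and 0 on N₂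
  obtain ⟨ψ, hψ_mem, hψ_one, hψ_zero⟩ :=
    sep_lemma (E := N₁ \ N₂) (F := N₂) (h1c.mono diff_subset)
      (fun v => extend_of_cEmbedded h1d hc₁ diff_subset v)
      h2cl (fun e he => he.2)
  -- φ = max W ψ : equal to 1 on N₁, 0 on N₂ \ N₁
  set φ : X → ℝ := fun x => max (W x) (ψ x) with hφ
  have hφ_cont : Continuous φ := hW_cont.max ψ.continuous
  have hφ_one : ∀ x ∈ N₁, φ x = 1 := by
    intro x hx1
    by_cases hx2 : x ∈ N₂
    · rw [hφ]
      simp only [hW_one x hx1 hx2]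
      exact max_eq_left (hψ_mem x).2
    · rw [hφ]
      simp only [hψ_one x ⟨hx1, hx2⟩]
      exact max_eq_right (hW_mem x).2
  have hφ_zero : ∀ x, x ∉ N₁ → x ∈ N₂ → φ x = 0 := by
    intro x hx1 hx2
    rw [hφ]
    simp [hW_zero x hx1 hx2, hψ_zero x hx2]
  -- Step 3: extend f restricted to N₂
  obtain ⟨g₀, hg₀⟩ := hc₂ ⟨fun y => f ⟨↑y, Or.inr y.2⟩, continuous_of_discreteTopology⟩
    ⟨M, fun y => hM ⟨↑y, Or.inr y.2⟩⟩
  -- Step 4: extend the correction term from N₁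
  obtain ⟨k₀, hk₀⟩ := hc₁ ⟨fun x => f ⟨↑x, Or.inl x.2⟩ - g₀ ↑x,
    continuous_of_discreteTopology⟩
  -- Step 5: the final extension
  refine ⟨⟨fun x => g₀ x + k₀ x * φ x, by fun_prop⟩, ?_⟩
  intro a
  simp only [ContinuousMap.coe_mk]
  by_cases ha1 : (a : X) ∈ N₁
  · have hk := hk₀ ⟨↑a, ha1⟩
    simp only [ContinuousMap.coe_mk] at hk
    rw [hk, hφ_one ↑a ha1]
    have : f ⟨↑a, Or.inl ha1⟩ = f a := by congr
    rw [this]; ring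
  · have ha2 : (a : X) ∈ N₂ := a.2.resolve_left ha1
    rw [hφ_zero ↑a ha1 ha2, mul_zero, add_zero]
    have := hg₀ ⟨↑a, ha2⟩
    simp only [ContinuousMap.coe_mk] at this
    rw [this]
end

section
/- For every continuous function f : J → ℝ there is a countable set S ⊆ ω₁ such that (i) f(α, n) = f(∞₁, n) for every α ∈ ω₁ \ S and every n ∈ ℕ, and (ii) f is constant on the set (ω₁ \ S) × {∞₀}. -/
open Set Topology Filter

/-- `ω₁`, the set of countable ordinals, as a type carrying the discrete topology. -/
def W1 : Type := (Cardinal.aleph 1).ord.ToType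

instance : TopologicalSpace W1 := ⊥
instance : DiscreteTopology W1 := ⟨rfl⟩

/-- The plank `J`: the product of the one-point compactifications of the discrete spaces
`ω₁` and `ℕ`, with the corner point `(∞₁, ∞₀)` removed. -/
abbrev J : Type := {p : OnePoint W1 × OnePoint ℕ // p ≠ (OnePoint.infty, OnePoint.infty)}

/-- The point `(α, n)` of `J`, for `α ∈ ω₁` and `n ∈ ℕ`. -/
def Jmk (α : W1) (n : ℕ) : J :=
  ⟨(↑α, ↑n), fun h => OnePoint.coe_ne_infty α (congrArg Prod.fst h)⟩

/-- The point `(α, ∞₀)` of the top line `T = ω₁ × {∞₀}` of `J`. -/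
def JmkTop (α : W1) : J :=
  ⟨(↑α, OnePoint.infty), fun h => OnePoint.coe_ne_infty α (congrArg Prod.fst h)⟩

/-- The point `(∞₁, n)` of the right-hand side `R = {∞₁} × ℕ` of `J`. -/
def JmkRight (n : ℕ) : J :=
  ⟨(OnePoint.infty, ↑n), fun h => OnePoint.coe_ne_infty n (congrArg Prod.snd h)⟩

lemma countable_ne_of_tendsto_cofinite {X : Type*} (g : X → ℝ) (L : ℝ)
    (h : Filter.Tendsto g Filter.cofinite (𝓝 L)) : {α | g α ≠ L}.Countable := by
  have : {α | g α ≠ L} ⊆ ⋃ k : ℕ, {α | (1 : ℝ) / (k + 1) ≤ dist (g α) L} := by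
    intro α hα
    have hd : 0 < dist (g α) L := dist_pos.mpr hα
    obtain ⟨k, hk⟩ := exists_nat_one_div_lt hd
    exact Set.mem_iUnion.mpr ⟨k, hk.le⟩
  refine Set.Countable.mono this (Set.countable_iUnion fun k => Set.Finite.countable ?_)
  have : ∀ᶠ α in Filter.cofinite, dist (g α) L < 1 / (k + 1) :=
    h (Metric.ball_mem_nhds L (by positivity))
  rw [Filter.eventually_cofinite] at this
  exact this.subset fun α hα => not_lt.mpr hα

lemma W1_uncountable : ¬ Countable W1 := by
  intro h
  have h1 : Cardinal.mk W1 = Cardinal.aleph 1 :=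
    Cardinal.mk_ord_toType _
  have := Cardinal.mk_le_aleph0_iff.mpr h
  rw [h1] at this
  exact absurd this (not_le.mpr (Cardinal.aleph0_lt_aleph_one))

/-- For every continuous `f : J → ℝ` there is a countable `S ⊆ ω₁` such that
`f(α, n) = f(∞₁, n)` for all `α ∉ S` and `n ∈ ℕ`, and `f` is constant on `(ω₁ \ S) × {∞₀}`. -/
theorem statement3 (f : C(J, ℝ)) :
    ∃ S : Set W1, S.Countable ∧
      (∀ α : W1, α ∉ S → ∀ n : ℕ, f (Jmk α n) = f (JmkRight n)) ∧
      (∃ c : ℝ, ∀ α : W1, α ∉ S → f (JmkTop α) = c) := by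
  classical
  -- the restriction to a horizontal line, as a continuous map on `OnePoint W1`
  have hrow : ∀ n : ℕ, Continuous fun x : OnePoint W1 =>
      f ⟨(x, (n : OnePoint ℕ)), fun h => OnePoint.coe_ne_infty n (congrArg Prod.snd h)⟩ := by
    intro n
    exact f.continuous.comp (Continuous.subtype_mk
      (continuous_id.prodMk continuous_const) _)
  -- hence for each `n`, the set of bad `α` is countable
  set S : Set W1 := ⋃ n : ℕ, {α | f (Jmk α n) ≠ f (JmkRight n)} with hS
  have hScount : S.Countable := by
    refine Set.countable_iUnion fun n => ?_
    have := (OnePoint.continuous_iff_from_discrete _).mp (hrow n)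
    exact countable_ne_of_tendsto_cofinite _ _ this
  have hmain : ∀ α : W1, α ∉ S → ∀ n : ℕ, f (Jmk α n) = f (JmkRight n) := by
    intro α hα n
    by_contra h
    exact hα (Set.mem_iUnion.mpr ⟨n, h⟩)
  -- vertical continuity: for each `α`, `f (Jmk α n) → f (JmkTop α)`
  have hcol : ∀ α : W1, Filter.Tendsto (fun n : ℕ => f (Jmk α n)) Filter.atTop
      (𝓝 (f (JmkTop α))) := by
    intro α
    have hc : Continuous fun y : OnePoint ℕ =>
        f ⟨((α : OnePoint W1), y), fun h => OnePoint.coe_ne_infty α (congrArg Prod.fst h)⟩ :=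
      f.continuous.comp (Continuous.subtype_mk (continuous_const.prodMk continuous_id) _)
    exact (OnePoint.continuous_iff_from_nat _).mp hc
  -- pick a base point outside `S`
  have hne : Sᶜ.Nonempty := by
    rcases Set.eq_empty_or_nonempty Sᶜ with h | h
    · exfalso
      apply W1_uncountable
      rw [← Set.countable_univ_iff]
      have : S = Set.univ := by
        rw [← Set.compl_empty_iff, h]
      rwa [this] at hScount
    · exact h
  obtain ⟨α₀, hα₀⟩ := hne
  refine ⟨S, hScount, hmain, f (JmkTop α₀), fun α hα => ?_⟩
  have h1 := hcol α
  have h2 := hcol α₀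
  have heq : (fun n : ℕ => f (Jmk α n)) = fun n : ℕ => f (Jmk α₀ n) := by
    funext n
    rw [hmain α hα n, hmain α₀ hα₀ n]
  rw [heq] at h1
  exact tendsto_nhds_unique h1 h2
end

section
/- The top line T = ω₁ × {∞₀} of the plank J is not C*-embedded in J: if S ⊆ ω₁ is a set such that both S and ω₁ \ S are uncountable, then the characteristic function of S × {∞₀}, which is a bounded continuous function on T (T being discrete), has no continuous extension to J. -/
open Set Topology

open Filter OnePoint in
instance W1.instUncountable : Uncountable W1 := by
  rw [← Cardinal.aleph0_lt_mk_iff]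
  have h : Cardinal.mk W1 = Cardinal.aleph 1 := Cardinal.mk_ord_toType _
  rw [h]
  exact Cardinal.aleph0_lt_aleph_one

lemma JmkTop_injective : Function.Injective JmkTop := by
  intro a b h
  have : (↑a : OnePoint W1) = ↑b := congrArg (fun x : J => x.val.1) h
  exact OnePoint.coe_injective this

open Filter OnePoint in
/-- Key step: no continuous extension of the indicator exists. -/
lemma key (S : Set W1) (hS : ¬ S.Countable) (hSc : ¬ Sᶜ.Countable) :
    ¬ ∃ g : C(J, ℝ), ∀ α : W1, g (JmkTop α) = S.indicator (fun _ => (1 : ℝ)) α := by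
  rintro ⟨g, hg⟩
  -- rows: tendsto along cofinite to the right-edge value
  have hrow : ∀ n : ℕ, Tendsto (fun α : W1 => g (Jmk α n)) cofinite
      (𝓝 (g (JmkRight n))) := by
    intro n
    have hφ : Continuous (fun x : OnePoint W1 =>
        (⟨(x, (n : OnePoint ℕ)), fun h => OnePoint.coe_ne_infty n (congrArg Prod.snd h)⟩ : J)) :=
      Continuous.subtype_mk (continuous_id.prodMk continuous_const) _
    have hc := (g.continuous.comp hφ).tendsto (OnePoint.infty)
    have := hc.comp OnePoint.tendsto_coe_infty
    rw [Filter.coclosedCompact_eq_cocompact, cocompact_eq_cofinite] at this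
    exact this
  -- columns: tendsto along atTop to the top-line value
  have hcol : ∀ α : W1, Tendsto (fun n : ℕ => g (Jmk α n)) atTop (𝓝 (g (JmkTop α))) := by
    intro α
    have hφ : Continuous (fun y : OnePoint ℕ =>
        (⟨((α : OnePoint W1), y), fun h => OnePoint.coe_ne_infty α (congrArg Prod.fst h)⟩ : J)) :=
      Continuous.subtype_mk (continuous_const.prodMk continuous_id) _
    have hc := (g.continuous.comp hφ).tendsto (OnePoint.infty)
    have := hc.comp OnePoint.tendsto_coe_infty
    rw [Filter.coclosedCompact_eq_cocompact, cocompact_eq_cofinite,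
      Nat.cofinite_eq_atTop] at this
    exact this
  -- for each n, outside a finite set, rows are within 1/4 of the edge value
  have hfin : ∀ n : ℕ,
      {α : W1 | ¬ dist (g (Jmk α n)) (g (JmkRight n)) < 1/4}.Finite := by
    intro n
    have := Metric.tendsto_nhds.mp (hrow n) (1/4) (by norm_num)
    exact Filter.eventually_cofinite.mp this
  set F : Set W1 := ⋃ n, {α : W1 | ¬ dist (g (Jmk α n)) (g (JmkRight n)) < 1/4} with hF
  have hFc : F.Countable := Set.countable_iUnion fun n => (hfin n).countable
  obtain ⟨α, hαS, hαF⟩ : ∃ α, α ∈ S ∧ α ∉ F := by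
    by_contra h
    push_neg at h
    exact hS (hFc.mono fun x hx => h x hx)
  obtain ⟨β, hβS, hβF⟩ : ∃ β, β ∈ Sᶜ ∧ β ∉ F := by
    by_contra h
    push_neg at h
    exact hSc (hFc.mono fun x hx => h x hx)
  have hα : ∀ n, dist (g (Jmk α n)) (g (JmkRight n)) < 1/4 := by
    intro n
    by_contra h
    exact hαF (Set.mem_iUnion.mpr ⟨n, h⟩)
  have hβ : ∀ n, dist (g (Jmk β n)) (g (JmkRight n)) < 1/4 := by
    intro n
    by_contra h
    exact hβF (Set.mem_iUnion.mpr ⟨n, h⟩)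
  have hlim : Tendsto (fun n : ℕ => dist (g (Jmk α n)) (g (Jmk β n))) atTop
      (𝓝 (dist (g (JmkTop α)) (g (JmkTop β)))) := (hcol α).dist (hcol β)
  have hle : dist (g (JmkTop α)) (g (JmkTop β)) ≤ 1/2 := by
    refine le_of_tendsto hlim (Filter.Eventually.of_forall fun n => ?_)
    calc dist (g (Jmk α n)) (g (Jmk β n))
        ≤ dist (g (Jmk α n)) (g (JmkRight n)) + dist (g (JmkRight n)) (g (Jmk β n)) :=
          dist_triangle _ _ _
      _ ≤ 1/4 + 1/4 := by
          have := hβ n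
          rw [dist_comm] at this
          exact add_le_add (hα n).le this.le
      _ = 1/2 := by norm_num
  rw [hg α, hg β, Set.indicator_of_mem hαS, Set.indicator_of_notMem hβS] at hle
  rw [Real.dist_eq] at hle
  norm_num at hle

instance : DiscreteTopology (Set.range JmkTop) := by
  rw [discreteTopology_iff_isOpen_singleton]
  rintro ⟨_, α, rfl⟩
  have h : ({⟨JmkTop α, ⟨α, rfl⟩⟩} : Set (Set.range JmkTop)) =
      (fun y : Set.range JmkTop => (y : J).val.1) ⁻¹' {((α : OnePoint W1))} := by
    ext ⟨y, β, rfl⟩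
    simp only [Set.mem_preimage, Set.mem_singleton_iff, JmkTop]
    constructor
    · rintro h
      have := congrArg (fun z : Set.range JmkTop => ((z : J) : OnePoint W1 × OnePoint ℕ).1) h
      exact this
    · intro h
      have : β = α := OnePoint.coe_injective h
      subst this
      rfl
  rw [h]
  have hopen : IsOpen ({((α : OnePoint W1))} : Set (OnePoint W1)) := by
    have : ({((α : OnePoint W1))} : Set (OnePoint W1)) = (↑) '' {α} := by simp
    rw [this]
    exact OnePoint.isOpenEmbedding_coe.isOpenMap _ (isOpen_discrete _)
  exact hopen.preimage ((continuous_fst.comp continuous_subtype_val).comp continuous_subtype_val)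

/-- The top line `T = ω₁ × {∞₀}` is not C*-embedded in `J`; indeed if
`S ⊆ ω₁` and both `S` and its complement are uncountable, then the characteristic function
of `S × {∞₀}` (a bounded continuous function on the discrete space `T`) has no continuous
extension to `J`. -/
theorem statement4 :
    ¬ CstarEmbedded (Set.range JmkTop) ∧
    ∀ S : Set W1, ¬ S.Countable → ¬ Sᶜ.Countable →
      ¬ ∃ g : C(J, ℝ), ∀ α : W1, g (JmkTop α) = S.indicator (fun _ => (1 : ℝ)) α := by
  constructor
  · -- construct S with S and Sᶜ uncountable
    obtain ⟨e⟩ : Nonempty (W1 ⊕ W1 ≃ W1) := by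
      rw [← Cardinal.eq, Cardinal.mk_sum]
      simp only [Cardinal.lift_id]
      exact Cardinal.add_eq_self (Cardinal.aleph0_le_mk W1)
    set S : Set W1 := Set.range (fun x => e (Sum.inl x)) with hSdef
    have hS : ¬ S.Countable := by
      intro hc
      have : Countable W1 := by
        have hinj : Function.Injective (fun x : W1 => (⟨e (Sum.inl x), ⟨x, rfl⟩⟩ : S)) := by
          intro a b hab
          have := congrArg Subtype.val hab
          exact Sum.inl_injective (e.injective this)
        have := hc.to_subtype
        exact Function.Injective.countable hinj
      exact not_countable this
    have hSc : ¬ Sᶜ.Countable := by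
      intro hc
      have hsub : Set.range (fun x : W1 => e (Sum.inr x)) ⊆ Sᶜ := by
        rintro _ ⟨x, rfl⟩ ⟨y, hy⟩
        exact Sum.inl_ne_inr (e.injective hy)
      have hc2 := hc.mono hsub
      have : Countable W1 := by
        have hinj : Function.Injective
            (fun x : W1 => (⟨e (Sum.inr x), ⟨x, rfl⟩⟩ : Set.range (fun x : W1 => e (Sum.inr x)))) := by
          intro a b hab
          have := congrArg Subtype.val hab
          exact Sum.inr_injective (e.injective this)
        have := hc2.to_subtype
        exact Function.Injective.countable hinj
      exact not_countable this
    intro hemb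
    -- the bounded continuous indicator function on the (discrete) top line
    set f : C(Set.range JmkTop, ℝ) :=
      ⟨fun x => Set.indicator ((↑) '' S : Set (OnePoint W1)) (fun _ => (1 : ℝ)) (x : J).val.1,
        continuous_of_discreteTopology⟩ with hfdef
    have hbdd : ∃ M : ℝ, ∀ a : Set.range JmkTop, |f a| ≤ M := by
      refine ⟨1, fun a => ?_⟩
      by_cases h : ((a : J).val.1) ∈ ((↑) '' S : Set (OnePoint W1))
      · simp [hfdef, Set.indicator_of_mem h]
      · simp [hfdef, Set.indicator_of_notMem h]
    obtain ⟨g, hgf⟩ := hemb f hbdd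
    refine key S hS hSc ⟨g, fun α => ?_⟩
    have := hgf ⟨JmkTop α, ⟨α, rfl⟩⟩
    rw [this]
    show Set.indicator ((↑) '' S : Set (OnePoint W1)) (fun _ => (1 : ℝ)) ((α : OnePoint W1))
      = S.indicator (fun _ => (1 : ℝ)) α
    by_cases hmem : α ∈ S
    · rw [Set.indicator_of_mem hmem, Set.indicator_of_mem (Set.mem_image_of_mem _ hmem)]
    · rw [Set.indicator_of_notMem hmem, Set.indicator_of_notMem]
      rintro ⟨β, hβ, hβα⟩
      exact hmem (OnePoint.coe_injective hβα ▸ hβ)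
  · exact key
end

section
/- The right-hand side R = {∞₁} × ℕ of the plank J is not C*-embedded in J: the function (∞₁, n) ↦ n mod 2, which is a bounded continuous function on R (R being discrete), has no continuous extension to J. -/
open Set Topology

section Aux

lemma JmkRight_injective : Function.Injective JmkRight := by
  intro m n hmn
  simpa [JmkRight, OnePoint.coe_eq_coe] using congrArg (fun p : J => p.1.2) hmn

lemma cont_fix_n (n : ℕ) :
    Continuous fun α : OnePoint W1 =>
      (⟨(α, (n : OnePoint ℕ)), fun h => OnePoint.coe_ne_infty n (congrArg Prod.snd h)⟩ : J) :=
  Continuous.subtype_mk (continuous_id.prodMk continuous_const) _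

lemma cont_fix_a (α : W1) :
    Continuous fun y : OnePoint ℕ =>
      (⟨((α : OnePoint W1), y), fun h => OnePoint.coe_ne_infty α (congrArg Prod.fst h)⟩ : J) :=
  Continuous.subtype_mk (continuous_const.prodMk continuous_id) _

lemma coclosed_W1 : Filter.coclosedCompact W1 = Filter.cofinite := by
  rw [Filter.coclosedCompact_eq_cocompact, Filter.cocompact_eq_cofinite]

lemma key_s5 : ¬ ∃ g : C(J, ℝ), ∀ n : ℕ, g (JmkRight n) = ((n % 2 : ℕ) : ℝ) := by
  rintro ⟨g, hg⟩
  -- for each `n`, the set of "bad" `α` is finite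
  have hfin : ∀ n : ℕ, {α : W1 | ¬ |g (Jmk α n) - ((n % 2 : ℕ) : ℝ)| < 1/4}.Finite := by
    intro n
    have hc := g.continuous.comp (cont_fix_n n)
    have ht : Filter.Tendsto (fun α : W1 => g (Jmk α n)) Filter.cofinite
        (nhds ((n % 2 : ℕ) : ℝ)) := by
      have h0 := (hc.tendsto (OnePoint.infty)).comp
        (coclosed_W1 ▸ OnePoint.tendsto_coe_infty (X := W1))
      have h0' : Filter.Tendsto (fun α : W1 => g (Jmk α n)) Filter.cofinite
          (nhds (g (JmkRight n))) := h0
      rw [hg n] at h0'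
      exact h0'
    have hmem := ht (Metric.ball_mem_nhds ((n % 2 : ℕ) : ℝ) (by norm_num : (0:ℝ) < 1/4))
    rw [Filter.mem_map, Filter.mem_cofinite] at hmem
    refine hmem.subset ?_
    intro α hα
    simp only [Set.mem_compl_iff, Set.mem_preimage, Metric.mem_ball, Real.dist_eq,
      Set.mem_setOf_eq] at *
    exact hα
  -- pick a "good" `α`
  have hcnt : (⋃ n : ℕ, {α : W1 | ¬ |g (Jmk α n) - ((n % 2 : ℕ) : ℝ)| < 1/4}).Countable :=
    Set.countable_iUnion fun n => (hfin n).countable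
  have huncount : ¬ (Set.univ : Set W1).Countable := by
    rw [Set.countable_univ_iff, ← Cardinal.mk_le_aleph0_iff, not_le]
    have hW : Cardinal.mk W1 = Cardinal.aleph 1 := Cardinal.mk_ord_toType _
    rw [hW]
    exact Cardinal.aleph0_lt_aleph_one
  obtain ⟨α, hα⟩ : ∃ α : W1,
      α ∉ ⋃ n : ℕ, {α : W1 | ¬ |g (Jmk α n) - ((n % 2 : ℕ) : ℝ)| < 1/4} := by
    by_contra h
    apply huncount
    refine hcnt.mono fun x _ => ?_
    by_contra hx
    exact h ⟨x, hx⟩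
  simp only [Set.mem_iUnion, Set.mem_setOf_eq, not_exists, not_not] at hα
  -- `g (Jmk α n)` tends to `g (JmkTop α)` as `n → ∞`
  have htend : Filter.Tendsto (fun n : ℕ => g (Jmk α n)) Filter.atTop
      (nhds (g (JmkTop α))) := by
    have h1 : Filter.Tendsto (fun n : ℕ => (n : OnePoint ℕ)) Filter.atTop
        (nhds (OnePoint.infty : OnePoint ℕ)) := by
      rw [← Nat.cofinite_eq_atTop, ← Filter.cocompact_eq_cofinite,
        ← Filter.coclosedCompact_eq_cocompact]
      exact OnePoint.tendsto_coe_infty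
    have hc := (g.continuous.comp (cont_fix_a α)).tendsto (OnePoint.infty : OnePoint ℕ)
    have h2 := hc.comp h1
    simpa [Function.comp_def, Jmk, JmkTop] using h2
  rw [Metric.tendsto_atTop] at htend
  obtain ⟨N, hN⟩ := htend (1/4) (by norm_num)
  have he := hN (2*N) (by omega)
  have ho := hN (2*N+1) (by omega)
  have hae := hα (2*N)
  have hao := hα (2*N+1)
  rw [Real.dist_eq] at he ho
  have h2 : (2*N) % 2 = 0 := by omega
  have h3 : (2*N+1) % 2 = 1 := by omega
  rw [h2] at hae; rw [h3] at hao
  rw [abs_lt] at he ho hae hao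
  push_cast at hae hao
  linarith

lemma disc : DiscreteTopology (Set.range JmkRight) := by
  rw [discreteTopology_iff_isOpen_singleton]
  rintro ⟨a, n, rfl⟩
  have hO : IsOpen {p : J | p.1.2 = ((n : ℕ) : OnePoint ℕ)} := by
    have hs : IsOpen {y : OnePoint ℕ | y = ((n : ℕ) : OnePoint ℕ)} := by
      simpa [Set.image_singleton] using
        (OnePoint.isOpenEmbedding_coe (X := ℕ)).isOpenMap {n} (isOpen_discrete _)
    exact (hs.preimage continuous_snd).preimage continuous_subtype_val
  have hset : ({⟨JmkRight n, Set.mem_range_self n⟩} : Set (Set.range JmkRight)) =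
      Subtype.val ⁻¹' {p : J | p.1.2 = ((n : ℕ) : OnePoint ℕ)} := by
    ext ⟨x, hx⟩
    obtain ⟨m, rfl⟩ := hx
    simp [Subtype.ext_iff, JmkRight, Prod.ext_iff]
  have : IsOpen ({⟨JmkRight n, Set.mem_range_self n⟩} : Set (Set.range JmkRight)) := by
    rw [hset]; exact hO.preimage continuous_subtype_val
  convert this using 2

end Aux

/-- The right-hand side `R = {∞₁} × ℕ` is not C*-embedded in `J`: the
function `(∞₁, n) ↦ n mod 2` (a bounded continuous function on the discrete space `R`) has
no continuous extension to `J`. -/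
theorem statement5 :
    ¬ CstarEmbedded (Set.range JmkRight) ∧
    ¬ ∃ g : C(J, ℝ), ∀ n : ℕ, g (JmkRight n) = ((n % 2 : ℕ) : ℝ) := by
  refine ⟨?_, key_s5⟩
  intro h
  haveI := disc
  classical
  let f : C(Set.range JmkRight, ℝ) :=
    ⟨fun a => ((Set.rangeSplitting JmkRight a % 2 : ℕ) : ℝ), continuous_of_discreteTopology⟩
  have hf : ∀ n : ℕ, f ⟨JmkRight n, Set.mem_range_self n⟩ = ((n % 2 : ℕ) : ℝ) := by
    intro n
    simp only [f, ContinuousMap.coe_mk]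
    congr 2
    have h2 : JmkRight (Set.rangeSplitting JmkRight ⟨JmkRight n, Set.mem_range_self n⟩) =
        JmkRight n := Set.apply_rangeSplitting JmkRight _
    exact JmkRight_injective h2
  have hbd : ∃ M : ℝ, ∀ a : Set.range JmkRight, |f a| ≤ M := by
    refine ⟨1, fun a => ?_⟩
    simp only [f, ContinuousMap.coe_mk]
    rw [abs_of_nonneg (by positivity)]
    exact_mod_cast Nat.le_of_lt_succ (Nat.mod_lt _ (by norm_num))
  obtain ⟨g, hg⟩ := h f hbd
  exact key_s5 ⟨g, fun n => (hg ⟨JmkRight n, Set.mem_range_self n⟩).trans (hf n)⟩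
end

section
/- The right-hand side R = {∞₁} × ℕ of the plank P is C*-embedded in P: every bounded continuous function f : R → ℝ extends to a continuous function P → ℝ (namely, extend n ↦ f(∞₁, n) to its Stone–Čech extension g : βℕ → ℝ and set the extension equal to g(u) at each point (α, u) of P). -/
open Set Topology

/-- The Stone–Čech compactification `βℕ` of the discrete space `ℕ`. -/
abbrev betaN : Type := StoneCech ℕ

/-- The Stone–Čech remainder `ℕ* = βℕ \ ℕ`. -/
def Nstar : Set betaN := (Set.range (stoneCechUnit : ℕ → betaN))ᶜ

/-- The plank `P`: the subspace `(ω₁⁺ × βℕ) \ ({∞₁} × ℕ*)` of `ω₁⁺ × βℕ`, where `ω₁⁺` is the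
one-point compactification of the discrete space `ω₁`. -/
abbrev P : Type :=
  {p : OnePoint W1 × betaN // ¬ (p.1 = OnePoint.infty ∧ p.2 ∈ Nstar)}

/-- The point `(∞₁, n)` of the right-hand side `R = {∞₁} × ℕ` of `P`. -/
def PmkR (n : ℕ) : P :=
  ⟨(OnePoint.infty, stoneCechUnit n), fun h => h.2 ⟨n, rfl⟩⟩

/-- The right-hand side `R = {∞₁} × ℕ` of the plank `P` is C*-embedded
in `P`. -/
theorem statement7 : CstarEmbedded (Set.range PmkR) := by
  intro f ⟨M, hM⟩
  -- the bounded sequence, valued in the compact interval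
  set h : ℕ → Set.Icc (-M) M := fun n =>
    ⟨f ⟨PmkR n, ⟨n, rfl⟩⟩, abs_le.mp (hM ⟨PmkR n, ⟨n, rfl⟩⟩)⟩ with hh
  have hc : Continuous h := continuous_of_discreteTopology
  let e : betaN → Set.Icc (-M) M := stoneCechExtend hc
  refine ⟨⟨fun p => (e p.val.2 : ℝ), ?_⟩, ?_⟩
  · exact continuous_subtype_val.comp
      ((continuous_stoneCechExtend hc).comp (continuous_snd.comp continuous_subtype_val))
  · rintro ⟨a, n, rfl⟩
    have : e (stoneCechUnit n) = h n := congrFun (stoneCechExtend_extends hc) n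
    simp only [ContinuousMap.coe_mk]
    rw [show (PmkR n).val.2 = stoneCechUnit n from rfl, this, hh]
end

section
/- The right-hand side R = {∞₁} × ℕ of the plank P is not C-embedded in P: the continuous function R → ℝ defined by (∞₁, n) ↦ n has no continuous extension to P. In fact, for every continuous g : P → ℝ the function n ↦ g(∞₁, n) is bounded. -/
open Set Topology

/-- A point of `P` with first coordinate in `ω₁`. -/
def Pmk (α : W1) (x : betaN) : P :=
  ⟨((α : OnePoint W1), x), fun h => (OnePoint.coe_ne_infty α) h.1⟩

lemma stoneCechUnit_nat_injective : Function.Injective (stoneCechUnit : ℕ → betaN) := by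
  intro n m h
  have hc : Continuous (fun k : ℕ => decide (k = m)) := continuous_of_discreteTopology
  have := eq_if_stoneCechUnit_eq hc h
  simpa using this

lemma PmkR_injective : Function.Injective PmkR := by
  intro n m h
  have : stoneCechUnit n = stoneCechUnit m := congrArg (fun p : P => p.val.2) h
  exact stoneCechUnit_nat_injective this

lemma isOpen_singleton_stoneCechUnit (n : ℕ) :
    IsOpen ({stoneCechUnit n} : Set betaN) := by
  have hc : Continuous (fun k : ℕ => decide (k = n)) := continuous_of_discreteTopology
  set φ := stoneCechExtend hc with hφ
  have hU : IsOpen (φ ⁻¹' {true}) := (isOpen_discrete _).preimage (continuous_stoneCechExtend hc)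
  have hext : ∀ m : ℕ, φ (stoneCechUnit m) = decide (m = n) := fun m =>
    congrFun (stoneCechExtend_extends hc) m
  have hmem : stoneCechUnit n ∈ φ ⁻¹' {true} := by simp [hext n]
  have hsub : φ ⁻¹' {true} ⊆ {stoneCechUnit n} := by
    by_contra hns
    obtain ⟨x, hxU, hxn⟩ := Set.not_subset.1 hns
    have hxopen : IsOpen (φ ⁻¹' {true} \ {stoneCechUnit n}) := hU.sdiff isClosed_singleton
    obtain ⟨m, hy⟩ := denseRange_stoneCechUnit.exists_mem_open hxopen ⟨x, hxU, hxn⟩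
    have h1 : m = n := by have := hy.1; simp [hext m] at this; exact this
    exact hy.2 (by rw [h1]; rfl)
  have : φ ⁻¹' {true} = {stoneCechUnit n} := hsub.antisymm (by simpa using hmem)
  rw [← this]; exact hU

instance : Uncountable W1 := by
  rw [← Cardinal.aleph0_lt_mk_iff]
  have : Cardinal.mk W1 = Cardinal.aleph 1 := Cardinal.mk_ord_toType _
  rw [this]
  exact Cardinal.aleph0_lt_aleph_one

lemma tendsto_Pmk (n : ℕ) :
    Filter.Tendsto (fun α : W1 => Pmk α (stoneCechUnit n)) Filter.cofinite (𝓝 (PmkR n)) := by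
  rw [tendsto_subtype_rng]
  have h1 : Filter.Tendsto (fun α : W1 => ((α : OnePoint W1))) Filter.cofinite
      (𝓝 OnePoint.infty) := by
    have := OnePoint.tendsto_coe_infty (X := W1)
    rwa [Filter.coclosedCompact_eq_cocompact, Filter.cocompact_eq_cofinite] at this
  exact h1.prodMk_nhds tendsto_const_nhds

lemma key_bound (g : C(P, ℝ)) : ∃ M : ℝ, ∀ n : ℕ, |g (PmkR n)| ≤ M := by
  have hfin : ∀ n : ℕ,
      {α : W1 | ¬ dist (g (Pmk α (stoneCechUnit n))) (g (PmkR n)) < 1}.Finite := by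
    intro n
    have ht : Filter.Tendsto (fun α : W1 => g (Pmk α (stoneCechUnit n))) Filter.cofinite
        (𝓝 (g (PmkR n))) := (g.continuous.tendsto _).comp (tendsto_Pmk n)
    have h2 := ht (Metric.ball_mem_nhds (g (PmkR n)) one_pos)
    rw [Filter.mem_map, Filter.mem_cofinite] at h2
    convert h2 using 1
    rfl
  set S : Set W1 := ⋃ n : ℕ, {α : W1 | ¬ dist (g (Pmk α (stoneCechUnit n))) (g (PmkR n)) < 1}
    with hSdef
  have hS : S.Countable := Set.countable_iUnion fun n => (hfin n).countable
  have hex : ∃ α₀ : W1, α₀ ∉ S := by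
    by_contra h
    push_neg at h
    have huniv : S = Set.univ := Set.eq_univ_of_forall h
    rw [huniv, Set.countable_univ_iff] at hS
    exact (not_countable_iff.mpr inferInstance) hS
  obtain ⟨α₀, hα₀⟩ := hex
  have hcont : Continuous (fun x : betaN => g (Pmk α₀ x)) :=
    g.continuous.comp (Continuous.subtype_mk (continuous_const.prodMk continuous_id) _)
  obtain ⟨M, hM⟩ := isCompact_univ.exists_bound_of_continuousOn hcont.continuousOn
  refine ⟨M + 1, fun n => ?_⟩
  have h1 : dist (g (Pmk α₀ (stoneCechUnit n))) (g (PmkR n)) < 1 := by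
    by_contra hcon
    exact hα₀ (Set.mem_iUnion.2 ⟨n, hcon⟩)
  have h2 : |g (Pmk α₀ (stoneCechUnit n))| ≤ M := by
    simpa [Real.norm_eq_abs] using hM (stoneCechUnit n) (Set.mem_univ _)
  have h3 : |g (PmkR n)| - |g (Pmk α₀ (stoneCechUnit n))| ≤
      |g (PmkR n) - g (Pmk α₀ (stoneCechUnit n))| := abs_sub_abs_le_abs_sub _ _
  rw [show |g (PmkR n) - g (Pmk α₀ (stoneCechUnit n))| =
      dist (g (PmkR n)) (g (Pmk α₀ (stoneCechUnit n))) from (Real.dist_eq _ _).symm] at h3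
  rw [dist_comm] at h1
  linarith

instance : DiscreteTopology ↥(Set.range PmkR) := by
  rw [discreteTopology_iff_isOpen_singleton]
  rintro ⟨a, n, rfl⟩
  have hcont : Continuous (fun p : ↥(Set.range PmkR) => (p.val : OnePoint W1 × betaN).2) :=
    continuous_snd.comp (continuous_subtype_val.comp continuous_subtype_val)
  have := (isOpen_singleton_stoneCechUnit n).preimage hcont
  convert this using 1
  ext p
  obtain ⟨b, m, rfl⟩ := p
  simp only [Set.mem_singleton_iff, Set.mem_preimage, Subtype.ext_iff]
  constructor
  · intro h
    rw [h]; rfl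
  · intro h
    have hmn : m = n := stoneCechUnit_nat_injective h
    rw [hmn]

/-- The right-hand side `R = {∞₁} × ℕ` of the plank `P` is not C-embedded in
`P`: the continuous function `(∞₁, n) ↦ n` on `R` has no continuous extension to `P`; in
fact, for every continuous `g : P → ℝ` the function `n ↦ g (∞₁, n)` is bounded. -/
theorem statement8 :
    ¬ CEmbedded (Set.range PmkR) ∧
    (¬ ∃ g : C(P, ℝ), ∀ n : ℕ, g (PmkR n) = (n : ℝ)) ∧
    (∀ g : C(P, ℝ), ∃ M : ℝ, ∀ n : ℕ, |g (PmkR n)| ≤ M) := by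
  have hno : ¬ ∃ g : C(P, ℝ), ∀ n : ℕ, g (PmkR n) = (n : ℝ) := by
    rintro ⟨g, hg⟩
    obtain ⟨M, hM⟩ := key_bound g
    obtain ⟨n, hn⟩ := exists_nat_gt M
    have h1 := hM n
    rw [hg n, abs_of_nonneg (Nat.cast_nonneg n)] at h1
    linarith
  refine ⟨?_, hno, key_bound⟩
  intro hCE
  set f : C(↥(Set.range PmkR), ℝ) :=
    ⟨fun a => ((Function.invFun PmkR a.val : ℕ) : ℝ), continuous_of_discreteTopology⟩ with hf
  obtain ⟨g, hg⟩ := hCE f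
  refine hno ⟨g, fun n => ?_⟩
  have := hg ⟨PmkR n, n, rfl⟩
  rw [this, hf]
  simp only [ContinuousMap.coe_mk]
  rw [Function.leftInverse_invFun PmkR_injective n]
end

section
/- The right-hand side R = ω₁* × ℕ of the plank V is C*-embedded in V: every bounded continuous function f : R → ℝ extends to a continuous function V → ℝ. -/
open Set Topology

/-- The Stone–Čech compactification `βω₁` of the discrete space `ω₁`. -/
abbrev betaW : Type := StoneCech W1

/-- The Stone–Čech remainder `ω₁* = βω₁ \ ω₁`. -/
def W1star : Set betaW := (Set.range (stoneCechUnit : W1 → betaW))ᶜ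

/-- The plank `V`: the subspace `(βω₁ × βℕ) \ (ω₁* × ℕ*)` of `βω₁ × βℕ`. -/
abbrev V : Type := {p : betaW × betaN // ¬ (p.1 ∈ W1star ∧ p.2 ∈ Nstar)}

/-- The right-hand side `R = ω₁* × ℕ` of the plank `V`, as a subset of `V`. -/
def Rside : Set V :=
  {p : V | p.1.1 ∈ W1star ∧ p.1.2 ∈ Set.range (stoneCechUnit : ℕ → betaN)}

/-- The point `(u, n)` of the right-hand side of `V`, for `u ∈ βω₁` and `n ∈ ℕ`. -/
def VmkR (u : betaW) (n : ℕ) : V :=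
  ⟨(u, stoneCechUnit n), fun h => h.2 ⟨n, rfl⟩⟩

open Classical in
lemma isOpen_singleton_stoneCechUnit_s10 {X : Type*} [TopologicalSpace X] [DiscreteTopology X]
    (x : X) : IsOpen ({stoneCechUnit x} : Set (StoneCech X)) := by
  set χ : X → Set.Icc (0:ℝ) 1 := fun y => if y = x then ⟨1, by norm_num⟩ else ⟨0, by norm_num⟩
    with hχdef
  have hχ : Continuous χ := continuous_of_discreteTopology
  set F : StoneCech X → ℝ := fun z => (stoneCechExtend hχ z).1 with hFdef
  have hF : Continuous F := continuous_subtype_val.comp (continuous_stoneCechExtend hχ)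
  set U : Set (StoneCech X) := F ⁻¹' Set.Ioi (1/2 : ℝ) with hUdef
  have hU : IsOpen U := isOpen_Ioi.preimage hF
  have hFy : ∀ y : X, F (stoneCechUnit y) = if y = x then 1 else 0 := by
    intro y
    have h1 : stoneCechExtend hχ (stoneCechUnit y) = χ y :=
      congrFun (stoneCechExtend_extends hχ) y
    rw [hFdef]
    simp only [h1, hχdef]
    split <;> rfl
  have hUx : stoneCechUnit x ∈ U := by
    simp only [hUdef, Set.mem_preimage, Set.mem_Ioi, hFy x, if_pos rfl]
    norm_num
  have hsub : U ∩ Set.range (stoneCechUnit : X → StoneCech X) ⊆ {stoneCechUnit x} := by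
    rintro _ ⟨hz, y, rfl⟩
    by_cases h : y = x
    · simp [h]
    · exfalso
      rw [Set.mem_preimage, Set.mem_Ioi, hFy y, if_neg h] at hz
      norm_num at hz
  have hfinal : U = {stoneCechUnit x} := by
    apply subset_antisymm
    · calc U ⊆ closure (U ∩ Set.range stoneCechUnit) :=
            denseRange_stoneCechUnit.open_subset_closure_inter hU
        _ ⊆ closure {stoneCechUnit x} := closure_mono hsub
        _ = {stoneCechUnit x} := closure_singleton
    · exact Set.singleton_subset_iff.mpr hUx
  rw [← hfinal]; exact hU

lemma isOpen_range_stoneCechUnit {X : Type*} [TopologicalSpace X] [DiscreteTopology X] :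
    IsOpen (Set.range (stoneCechUnit : X → StoneCech X)) := by
  rw [← Set.iUnion_singleton_eq_range]
  exact isOpen_iUnion fun x => isOpen_singleton_stoneCechUnit_s10 x

/-- The right-hand side `R = ω₁* × ℕ` of the plank `V` is C*-embedded
in `V`. -/
theorem statement10 : CstarEmbedded Rside := by
  rintro f ⟨M₀, hM₀⟩
  set M : ℝ := max M₀ 0 with hMdef
  have hM0 : (0:ℝ) ≤ M := le_max_right _ _
  have hfM : ∀ a, |f a| ≤ M := fun a => (hM₀ a).trans (le_max_left _ _)
  have hW1closed : IsClosed W1star := isOpen_range_stoneCechUnit.isClosed_compl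
  have hex : ∀ n : ℕ, ∃ G : C(betaW, ℝ),
      (∀ u : betaW, ∀ hu : u ∈ W1star, G u = f ⟨VmkR u n, ⟨hu, n, rfl⟩⟩) ∧
      (∀ x, G x ∈ Set.Icc (-M) M) := by
    intro n
    have hcontfn : Continuous fun u : W1star => f ⟨VmkR u.1 n, ⟨u.2, n, rfl⟩⟩ := by
      apply f.continuous.comp
      apply Continuous.subtype_mk
      apply Continuous.subtype_mk
      exact continuous_subtype_val.prodMk continuous_const
    obtain ⟨G₀, hG₀⟩ := ContinuousMap.exists_restrict_eq hW1closed
      (⟨_, hcontfn⟩ : C(W1star, ℝ))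
    refine ⟨⟨fun x => max (-M) (min M (G₀ x)), by fun_prop⟩, ?_, ?_⟩
    · intro u hu
      have h1 : G₀ u = f ⟨VmkR u n, ⟨hu, n, rfl⟩⟩ :=
        congrFun (congrArg DFunLike.coe hG₀) ⟨u, hu⟩
      have hb := abs_le.mp (hfM ⟨VmkR u n, ⟨hu, n, rfl⟩⟩)
      simp only [ContinuousMap.coe_mk, h1]
      rw [min_eq_right hb.2, max_eq_right hb.1]
    · intro x
      refine ⟨le_max_left _ _, max_le (by linarith) (min_le_left _ _)⟩
  choose G hGeq hGmem using hex
  have hcontK : ∀ u : betaW,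
      Continuous (fun n : ℕ => (⟨G n u, hGmem n u⟩ : Set.Icc (-M) M)) :=
    fun _ => continuous_of_discreteTopology
  set K : betaW → betaN → ℝ := fun u t => (stoneCechExtend (hcontK u) t).1 with hKdef
  have hKunit : ∀ u n, K u (stoneCechUnit n) = G n u := fun u n =>
    congrArg Subtype.val (congrFun (stoneCechExtend_extends (hcontK u)) n)
  have hKcont : ∀ u, Continuous (K u) := fun u =>
    continuous_subtype_val.comp (continuous_stoneCechExtend (hcontK u))
  set g : V → ℝ := fun p => K p.1.1 p.1.2 with hgdef
  have hgc : Continuous g := by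
    rw [continuous_iff_continuousAt]
    intro p
    rcases not_and_or.mp p.2 with hu | ht
    · obtain ⟨α, hα⟩ := Set.notMem_compl_iff.mp hu
      have hop : IsOpen {q : V | q.1.1 = stoneCechUnit α} :=
        (isOpen_singleton_stoneCechUnit_s10 α).preimage
          (continuous_fst.comp continuous_subtype_val)
      have hmem : p ∈ {q : V | q.1.1 = stoneCechUnit α} := hα.symm
      have hca : ContinuousAt (fun q : V => K (stoneCechUnit α) q.1.2) p :=
        ((hKcont _).comp (continuous_snd.comp continuous_subtype_val)).continuousAt
      apply hca.congr
      filter_upwards [hop.mem_nhds hmem] with q hq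
      rw [hgdef]
      simp only
      rw [hq]
    · obtain ⟨n, hn⟩ := Set.notMem_compl_iff.mp ht
      have hop : IsOpen {q : V | q.1.2 = stoneCechUnit n} :=
        (isOpen_singleton_stoneCechUnit_s10 n).preimage
          (continuous_snd.comp continuous_subtype_val)
      have hmem : p ∈ {q : V | q.1.2 = stoneCechUnit n} := hn.symm
      have hca : ContinuousAt (fun q : V => G n q.1.1) p :=
        ((G n).continuous.comp (continuous_fst.comp continuous_subtype_val)).continuousAt
      apply hca.congr
      filter_upwards [hop.mem_nhds hmem] with q hq
      rw [hgdef]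
      simp only
      rw [hq, hKunit]
  refine ⟨⟨g, hgc⟩, ?_⟩
  rintro ⟨p, hu, ht⟩
  obtain ⟨n, hn⟩ := ht
  have h1 : g p = K p.1.1 p.1.2 := rfl
  have h2 : K p.1.1 p.1.2 = G n p.1.1 := by rw [← hn, hKunit]
  have h3 : G n p.1.1 = f ⟨VmkR p.1.1 n, ⟨hu, n, rfl⟩⟩ := hGeq n p.1.1 hu
  have h4 : (⟨VmkR p.1.1 n, ⟨hu, n, rfl⟩⟩ : Rside) = ⟨p, hu, ⟨n, hn⟩⟩ := by
    apply Subtype.ext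
    apply Subtype.ext
    exact Prod.ext rfl hn
  simp only [ContinuousMap.coe_mk]
  rw [h1, h2, h3, h4]
end

section
/- The right-hand side R = ω₁* × ℕ of the plank V is not C-embedded in V: the continuous function R → ℝ defined by (u, n) ↦ n has no continuous extension to V. -/
open Set Topology

open Classical in
lemma unit_inj {α : Type*} [TopologicalSpace α] [DiscreteTopology α] :
    Function.Injective (stoneCechUnit : α → StoneCech α) := by
  intro a b h
  have : decide (a = b) = decide (b = b) :=
    eq_if_stoneCechUnit_eq (f := fun x => decide (x = b))
      (continuous_of_discreteTopology) h
  simpa using this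

open Classical in
lemma isOpen_singleton_unit {α : Type*} [TopologicalSpace α] [DiscreteTopology α] (a : α) :
    IsOpen ({stoneCechUnit a} : Set (StoneCech α)) := by
  set f : α → Bool := fun x => decide (x = a) with hf
  have hcf : Continuous f := continuous_of_discreteTopology
  set E := stoneCechExtend hcf with hE
  have hext : ∀ x, E (stoneCechUnit x) = f x := fun x =>
    congrFun (stoneCechExtend_extends hcf) x
  have hU : IsOpen (E ⁻¹' {true}) :=
    (isOpen_discrete _).preimage (continuous_stoneCechExtend hcf)
  have key : E ⁻¹' {true} = {stoneCechUnit a} := by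
    apply Set.eq_singleton_iff_unique_mem.2
    refine ⟨by simp [Set.mem_preimage, hext a, hf], ?_⟩
    intro w hw
    by_contra hne
    have hopen : IsOpen (E ⁻¹' {true} \ {stoneCechUnit a}) :=
      hU.sdiff isClosed_singleton
    have hne' : (E ⁻¹' {true} \ {stoneCechUnit a}).Nonempty := ⟨w, hw, hne⟩
    obtain ⟨x, hx1, hx2⟩ :=
      denseRange_stoneCechUnit.exists_mem_open hopen hne'
    have hxa : x = a := by
      have h1 : E (stoneCechUnit x) = true := hx1
      rw [hext x] at h1
      simpa [hf] using h1
    exact hx2 (by rw [hxa]; exact rfl)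
  rw [← key]; exact hU

lemma finite_of_isCompact_subset {α : Type*} [TopologicalSpace α] [DiscreteTopology α]
    {K : Set (StoneCech α)} (hK : IsCompact K)
    (hsub : K ⊆ Set.range (stoneCechUnit : α → StoneCech α)) : K.Finite := by
  have : DiscreteTopology K := by
    rw [discreteTopology_iff_isOpen_singleton]
    rintro ⟨w, hw⟩
    obtain ⟨x, rfl⟩ := hsub hw
    have heq : ({(⟨stoneCechUnit x, hw⟩ : K)} : Set K) =
        Subtype.val ⁻¹' {stoneCechUnit x} := by
      ext ⟨y, hy⟩; simp [Subtype.ext_iff]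
    rw [heq]
    exact (isOpen_singleton_unit x).preimage continuous_subtype_val
  exact hK.finite (isDiscrete_iff_discreteTopology.mpr this)

instance inst_s11 : Uncountable W1 := by
  rw [← Cardinal.aleph0_lt_mk_iff]
  have : (Cardinal.mk W1) = Cardinal.aleph 1 := Cardinal.mk_ord_toType _
  rw [this]
  exact Cardinal.aleph0_lt_aleph_one

/-- No continuous extension of `(u, n) ↦ n` to `V`. -/
lemma no_ext :
    ¬ ∃ g : C(V, ℝ), ∀ u : betaW, u ∈ W1star → ∀ n : ℕ, g (VmkR u n) = (n : ℝ) := by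
  rintro ⟨g, hg⟩
  -- for each n, the slice function on βω₁
  have hcont : ∀ n : ℕ, Continuous (fun w : betaW => g (VmkR w n)) := by
    intro n
    exact g.continuous.comp
      (Continuous.subtype_mk (continuous_id.prodMk continuous_const) _)
  set A : ℕ → Set W1 :=
    fun n => {α | (1:ℝ)/2 ≤ |g (VmkR (stoneCechUnit α) n) - n|} with hA
  have hfin : ∀ n, (A n).Finite := by
    intro n
    set C : Set betaW := {w | (1:ℝ)/2 ≤ |g (VmkR w n) - n|} with hC
    have hCclosed : IsClosed C := by
      have : C = (fun w => |g (VmkR w n) - (n:ℝ)|) ⁻¹' (Set.Ici ((1:ℝ)/2)) := rfl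
      rw [this]
      exact isClosed_Ici.preimage (((hcont n).sub continuous_const).abs)
    have hKsub : closure (stoneCechUnit '' A n) ⊆ C :=
      closure_minimal (fun w ⟨a, ha, hw⟩ => hw ▸ ha) hCclosed
    have hKrange : closure (stoneCechUnit '' A n) ⊆
        Set.range (stoneCechUnit : W1 → betaW) := by
      intro w hw
      by_contra hnr
      have hwstar : w ∈ W1star := hnr
      have := hg w hwstar n
      have h2 : (1:ℝ)/2 ≤ |g (VmkR w n) - n| := hKsub hw
      rw [this] at h2
      simp at h2
      linarith
    have hKfin : (closure (stoneCechUnit '' A n)).Finite :=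
      finite_of_isCompact_subset isClosed_closure.isCompact hKrange
    have himg : (stoneCechUnit '' A n).Finite := hKfin.subset subset_closure
    exact Set.Finite.of_finite_image himg (unit_inj.injOn)
  -- pick α outside all A n
  have hcnt : (⋃ n, A n).Countable := Set.countable_iUnion fun n => (hfin n).countable
  have : (⋃ n, A n) ≠ Set.univ := by
    intro h
    rw [h] at hcnt
    exact (Set.not_countable_univ_iff.mpr inferInstance) hcnt
  obtain ⟨α, hα⟩ : ∃ α : W1, α ∉ ⋃ n, A n := by
    by_contra h
    push_neg at h
    exact this (Set.eq_univ_of_forall h)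
  have hαn : ∀ n : ℕ, |g (VmkR (stoneCechUnit α) n) - n| < 1/2 := by
    intro n
    by_contra h
    push_neg at h
    exact hα (Set.mem_iUnion.2 ⟨n, h⟩)
  -- the slice function on βℕ at α is continuous hence bounded; contradiction
  set F : betaN → ℝ := fun q => g ⟨(stoneCechUnit α, q), fun h => h.1 ⟨α, rfl⟩⟩ with hF
  have hFcont : Continuous F :=
    g.continuous.comp (Continuous.subtype_mk (continuous_const.prodMk continuous_id) _)
  obtain ⟨M, hM⟩ : BddAbove (Set.range F) := (isCompact_range hFcont).bddAbove
  obtain ⟨n, hn⟩ := exists_nat_gt (M + 1/2)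
  have hFn : F (stoneCechUnit n) = g (VmkR (stoneCechUnit α) n) := by
    congr 1
  have h1 : F (stoneCechUnit n) ≤ M := hM ⟨stoneCechUnit n, rfl⟩
  have h2 := hαn n
  rw [hFn] at h1
  have := abs_lt.mp h2
  linarith [this.1]

/-- The right-hand side `R = ω₁* × ℕ` of the plank `V` is not C-embedded in
`V`: the continuous function `(u, n) ↦ n` on `R` has no continuous extension to `V`. -/
theorem statement11 :
    ¬ CEmbedded Rside ∧
    ¬ ∃ g : C(V, ℝ), ∀ u : betaW, u ∈ W1star → ∀ n : ℕ, g (VmkR u n) = (n : ℝ) := by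
  refine ⟨?_, no_ext⟩
  intro hCE
  -- the function (u, n) ↦ n on Rside
  classical
  set N : ↥Rside → ℕ :=
    fun p => Function.invFun (stoneCechUnit : ℕ → betaN) p.1.1.2 with hN
  have hNval : ∀ (p : ↥Rside) (n : ℕ), p.1.1.2 = stoneCechUnit n → N p = n := by
    intro p n hp
    simp only [hN, hp]
    exact Function.leftInverse_invFun unit_inj n
  have hfc : Continuous (fun p : ↥Rside => (N p : ℝ)) := by
    rw [continuous_iff_continuousAt]
    intro a
    obtain ⟨n, hn⟩ := a.2.2
    have hUopen : IsOpen {p : ↥Rside | p.1.1.2 = stoneCechUnit n} := by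
      have : {p : ↥Rside | p.1.1.2 = stoneCechUnit n} =
          (fun p : ↥Rside => p.1.1.2) ⁻¹' {stoneCechUnit n} := rfl
      rw [this]
      exact (isOpen_singleton_unit n).preimage
        ((continuous_snd.comp continuous_subtype_val).comp continuous_subtype_val)
    have ha : a ∈ {p : ↥Rside | p.1.1.2 = stoneCechUnit n} := hn.symm
    have heq : (fun p : ↥Rside => (N p : ℝ)) =ᶠ[nhds a] fun _ => (n : ℝ) := by
      filter_upwards [hUopen.mem_nhds ha] with p hp
      rw [hNval p n hp]
    exact ContinuousAt.congr continuousAt_const heq.symm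
  obtain ⟨g, hgext⟩ := hCE ⟨fun p => (N p : ℝ), hfc⟩
  apply no_ext
  refine ⟨g, fun u hu n => ?_⟩
  have hmem : VmkR u n ∈ Rside := ⟨hu, ⟨n, rfl⟩⟩
  have := hgext ⟨VmkR u n, hmem⟩
  rw [this]
  simp only [ContinuousMap.coe_mk]
  rw [hNval ⟨VmkR u n, hmem⟩ n rfl]
end

section
/- The right-hand side R = {∞} × D of the plank 𝔸 is C*-embedded in 𝔸: every bounded continuous function f : R → ℝ extends to a continuous function 𝔸 → ℝ. -/
open Set Topology

/-- `D = 2^{<ω}`, the set of finite binary sequences; as a space it is discrete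
(the topology on `List Bool` is discrete since `Bool` is discrete). -/
abbrev D : Type := List Bool

/-- The Stone–Čech compactification `βD` of the discrete space `D`. -/
abbrev betaD : Type := StoneCech D

/-- The wedge `U(x, n) ∩ D`: all finite binary sequences extending `x ↾ n`. -/
def wedge (x : ℕ → Bool) (n : ℕ) : Set D :=
  {s : D | (List.ofFn fun i : Fin n => x i) <+: s}

/-- `K x = e⁻¹(x)`, where `e : βD → cD` is the continuous extension of the identity of `D` to
the compactification `cD = D ∪ 2^ω`: the set of points of `βD` lying in the closure of every
wedge `U(x, n) ∩ D`. -/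
def K (x : ℕ → Bool) : Set betaD :=
  ⋂ n : ℕ, closure (stoneCechUnit '' wedge x n)

/-- `Λ = 2^ω ∪ {∞}`. -/
def Lam : Type := Option (ℕ → Bool)

/-- The point `x ∈ 2^ω` of `Λ`. -/
def Lam.mk (x : ℕ → Bool) : Lam := Option.some x

/-- The point `∞` of `Λ`. -/
def Lam.infty : Lam := Option.none

/-- The topology on `Λ`: every point of `2^ω` is isolated, and the neighbourhoods of `∞` are
exactly the sets containing `∞` whose complement in `2^ω` is countable. -/
instance : TopologicalSpace Lam where
  IsOpen U := Lam.infty ∈ U → {x : ℕ → Bool | Lam.mk x ∉ U}.Countable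
  isOpen_univ := fun _ => by simp
  isOpen_inter := by
    intro U V hU hV h
    refine ((hU h.1).union (hV h.2)).mono fun x hx => ?_
    by_cases hxU : Lam.mk x ∈ U
    · exact Or.inr fun hxV => hx ⟨hxU, hxV⟩
    · exact Or.inl hxU
  isOpen_sUnion := by
    intro S hS h
    obtain ⟨U, hUS, hU⟩ := h
    exact (hS U hUS hU).mono fun x hx hxU => hx ⟨U, hUS, hxU⟩

/-- The plank `𝔸`: the subspace `(Λ × D) ∪ ⋃_{x ∈ 2^ω} ({x} × K x)` of `Λ × βD`. -/
abbrev Aplank : Type :=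
  {p : Lam × betaD //
    (∃ s : D, p.2 = stoneCechUnit s) ∨ (∃ x : ℕ → Bool, p.1 = Lam.mk x ∧ p.2 ∈ K x)}

/-- The point `(∞, s)` of the right-hand side `R = {∞} × D` of `𝔸`. -/
def AmkR (s : D) : Aplank := ⟨(Lam.infty, stoneCechUnit s), Or.inl ⟨s, rfl⟩⟩

/-- The right-hand side `R = {∞} × D` of the plank `𝔸` is C*-embedded
in `𝔸`. -/
theorem statement14 : CstarEmbedded (Set.range AmkR) := by
  intro f ⟨M, hM⟩
  -- the underlying bounded function on D, valued in the compact interval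
  set F : D → ℝ := fun s => f ⟨AmkR s, Set.mem_range_self s⟩ with hF
  have hMem : ∀ s : D, F s ∈ Set.Icc (-M) M := fun s =>
    abs_le.mp (hM ⟨AmkR s, Set.mem_range_self s⟩)
  set F' : D → Set.Icc (-M) M := fun s => ⟨F s, hMem s⟩ with hF'
  have hcont : Continuous F' := continuous_of_discreteTopology
  -- extend over βD and compose with the second projection
  let G : betaD → ℝ := fun p => (stoneCechExtend hcont p).1
  have hG : Continuous G := continuous_subtype_val.comp (continuous_stoneCechExtend hcont)
  refine ⟨⟨fun a => G a.1.2, hG.comp ((continuous_snd).comp continuous_subtype_val)⟩, ?_⟩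
  rintro ⟨a, s, rfl⟩
  have h1 : G (stoneCechUnit s) = F s :=
    congrArg Subtype.val (congrFun (stoneCechExtend_extends hcont) s)
  simpa [AmkR, hF] using h1
end

section
/- The right-hand side R = {∞} × D of the plank 𝔸 is not C-embedded in 𝔸: the continuous function R → ℝ defined by (∞, s) ↦ |s| (the length of the finite binary sequence s) has no continuous extension to 𝔸. -/
open Set Topology

noncomputable section PlankProof
open Classical

/-- The horizontal embedding of `Λ` at level `s`. -/
def phiR (s : D) (l : Lam) : Aplank := ⟨(l, stoneCechUnit s), Or.inl ⟨s, rfl⟩⟩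

lemma continuous_phiR (s : D) : Continuous (phiR s) :=
  (continuous_id.prodMk continuous_const).subtype_mk _

lemma wedge_antitone (x : ℕ → Bool) (n : ℕ) : wedge x (n + 1) ⊆ wedge x n := by
  intro s hs
  have h1 : (List.ofFn fun i : Fin n => x i) <+: (List.ofFn fun i : Fin (n + 1) => x i) := by
    rw [List.ofFn_succ']; exact List.prefix_concat _ _
  exact h1.trans hs

lemma K_nonempty (x : ℕ → Bool) : (K x).Nonempty := by
  apply IsCompact.nonempty_iInter_of_sequence_nonempty_isCompact_isClosed
  · intro n; exact closure_mono (Set.image_mono (wedge_antitone x n))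
  · intro n
    exact ⟨stoneCechUnit (List.ofFn fun i : Fin n => x i),
      subset_closure ⟨_, List.prefix_refl _, rfl⟩⟩
  · exact isClosed_closure.isCompact
  · intro n; exact isClosed_closure

lemma stoneCechUnit_inj {s t : D} (h : stoneCechUnit s = stoneCechUnit t) : s = t := by
  have hc : Continuous ((fun l : D => decide (l = s)) : D → Bool) :=
    continuous_of_discreteTopology
  have h1 := congrFun (stoneCechExtend_extends hc) s
  have h2 := congrFun (stoneCechExtend_extends hc) t
  simp only [Function.comp_apply] at h1 h2
  rw [h] at h1
  rw [h1] at h2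
  exact ((by simpa using h2.symm : t = s)).symm

lemma AmkR_inj {s t : D} (h : AmkR s = AmkR t) : s = t := by
  apply stoneCechUnit_inj
  have := congrArg (fun a : Aplank => a.val.2) h
  simpa [AmkR] using this

lemma isOpen_unit_singleton (s : D) : IsOpen ({stoneCechUnit s} : Set betaD) := by
  have hc : Continuous ((fun l : D => decide (l = s)) : D → Bool) :=
    continuous_of_discreteTopology
  have hHc : Continuous (stoneCechExtend hc) := continuous_stoneCechExtend hc
  have key : stoneCechExtend hc ⁻¹' {true} = {stoneCechUnit s} := by
    apply subset_antisymm
    · intro q hq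
      have hq2 : q ∈ closure (stoneCechUnit '' {s}) ∪
          closure (stoneCechUnit '' {l : D | l ≠ s}) := by
        rw [← closure_union, ← Set.image_union]
        have huniv : ({s} ∪ {l : D | l ≠ s}) = Set.univ := by
          ext l; by_cases h : l = s <;> simp [h]
        rw [huniv, Set.image_univ]
        exact denseRange_stoneCechUnit q
      rcases hq2 with h1 | h1
      · simpa using h1
      · exfalso
        have hmaps : Set.MapsTo (stoneCechExtend hc)
            (stoneCechUnit '' {l : D | l ≠ s}) ({false} : Set Bool) := by
          rintro y ⟨l, hl, rfl⟩
          have := congrFun (stoneCechExtend_extends hc) l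
          simp only [Function.comp_apply] at this
          simp only [this, Set.mem_singleton_iff, decide_eq_false_iff_not]
          exact hl
        have := map_mem_closure hHc h1 hmaps
        rw [closure_singleton] at this
        have hqt : stoneCechExtend hc q = true := hq
        rw [this] at hqt
        exact Bool.false_ne_true hqt
    · intro q hq
      rw [Set.mem_singleton_iff] at hq
      subst hq
      have := congrFun (stoneCechExtend_extends hc) s
      simp only [Function.comp_apply] at this
      simp [this]
  rw [← key]
  exact (isOpen_discrete _).preimage hHc

lemma uncountable_funBool : ¬ (Set.univ : Set (ℕ → Bool)).Countable := by
  intro h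
  have : Countable (ℕ → Bool) := Set.countable_univ_iff.mp h
  obtain ⟨f, hf⟩ := exists_surjective_nat (ℕ → Bool)
  obtain ⟨m, hm⟩ := hf (fun n => ! f n n)
  have := congrFun hm m
  simp at this

lemma main_lemma : ¬ ∃ g : C(Aplank, ℝ), ∀ s : D, g (AmkR s) = (s.length : ℝ) := by
  rintro ⟨g, hg⟩
  set B : D → Set (ℕ → Bool) := fun s =>
    {x | Lam.mk x ∉ (fun l : Lam => g (phiR s l)) ⁻¹' Metric.ball (s.length : ℝ) 1} with hB
  have hBc : ∀ s, (B s).Countable := by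
    intro s
    have hopen : IsOpen ((fun l : Lam => g (phiR s l)) ⁻¹' Metric.ball (s.length : ℝ) 1) :=
      Metric.isOpen_ball.preimage (g.continuous.comp (continuous_phiR s))
    have hmem : Lam.infty ∈ (fun l : Lam => g (phiR s l)) ⁻¹' Metric.ball (s.length : ℝ) 1 := by
      have heq : phiR s Lam.infty = AmkR s := rfl
      simp [Set.mem_preimage, heq, hg s]
    exact hopen hmem
  obtain ⟨x, hx⟩ : ∃ x, x ∉ ⋃ s : D, B s := by
    by_contra h
    push_neg at h
    exact uncountable_funBool ((Set.countable_iUnion hBc).mono fun x _ => h x)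
  have hxs : ∀ s : D, (s.length : ℝ) - 1 < g (phiR s (Lam.mk x)) := by
    intro s
    have hxB : x ∉ B s := fun h => hx (Set.mem_iUnion.mpr ⟨s, h⟩)
    simp only [hB, Set.mem_setOf_eq, not_not] at hxB
    have hd : dist (g (phiR s (Lam.mk x))) ((s.length : ℝ)) < 1 := hxB
    rw [Real.dist_eq, abs_sub_lt_iff] at hd
    linarith [hd.2]
  obtain ⟨p, hp⟩ := K_nonempty x
  set a : Aplank := ⟨(Lam.mk x, p), Or.inr ⟨x, rfl, hp⟩⟩ with ha
  have hW : g ⁻¹' Metric.ball (g a) 1 ∈ nhds a :=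
    g.continuous.continuousAt (Metric.ball_mem_nhds _ one_pos)
  rw [nhds_subtype_eq_comap, Filter.mem_comap] at hW
  obtain ⟨t, ht, hts⟩ := hW
  rw [mem_nhds_prod_iff] at ht
  obtain ⟨u, hu, v, hv, huv⟩ := ht
  obtain ⟨v', hv'sub, hv'open, hpv'⟩ := mem_nhds_iff.mp hv
  obtain ⟨n, hn⟩ := exists_nat_gt (g a + 2)
  have hpc : p ∈ closure (stoneCechUnit '' wedge x n) := by
    have h' := hp; rw [K, Set.mem_iInter] at h'; exact h' n
  obtain ⟨q, hqv, s, hsw, rfl⟩ : ∃ q ∈ v', ∃ s ∈ wedge x n, stoneCechUnit s = q := by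
    obtain ⟨q, hq1, hq2⟩ := (mem_closure_iff.mp hpc) v' hv'open hpv'
    obtain ⟨s, hs1, hs2⟩ := hq2
    exact ⟨q, hq1, s, hs1, hs2⟩
  have hb : phiR s (Lam.mk x) ∈ Subtype.val ⁻¹' t := by
    apply Set.mem_preimage.mpr
    apply huv
    exact ⟨mem_of_mem_nhds hu, hv'sub hqv⟩
  have hball : g (phiR s (Lam.mk x)) ∈ Metric.ball (g a) 1 := hts hb
  have h1 : g (phiR s (Lam.mk x)) < g a + 1 := by
    have hd := Metric.mem_ball.mp hball
    rw [Real.dist_eq, abs_sub_lt_iff] at hd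
    linarith [hd.1]
  have h2 : (n : ℝ) ≤ s.length := by
    exact_mod_cast by simpa using hsw.length_le
  have h3 := hxs s
  linarith

end PlankProof

/-- The right-hand side `R = {∞} × D` of the plank `𝔸` is not C-embedded in
`𝔸`: the continuous function `(∞, s) ↦ |s|` on `R` has no continuous extension to `𝔸`. -/


theorem statement15 :
    ¬ CEmbedded (Set.range AmkR) ∧
    ¬ ∃ g : C(Aplank, ℝ), ∀ s : D, g (AmkR s) = (s.length : ℝ) := by
  classical
  refine ⟨?_, main_lemma⟩
  intro hC
  have hdisc : ∀ a : Set.range AmkR, IsOpen ({a} : Set (Set.range AmkR)) := by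
    intro a
    obtain ⟨s, hs⟩ := a.2
    have hcont : Continuous (fun b : Set.range AmkR => (b : Aplank).val.2) :=
      (continuous_snd.comp continuous_subtype_val).comp continuous_subtype_val
    have hkey : ({a} : Set (Set.range AmkR)) =
        (fun b : Set.range AmkR => (b : Aplank).val.2) ⁻¹' {stoneCechUnit s} := by
      ext b
      simp only [Set.mem_singleton_iff, Set.mem_preimage]
      constructor
      · rintro rfl
        rw [← hs]
        rfl
      · intro hb
        obtain ⟨t, ht⟩ := b.2
        have hut : stoneCechUnit t = stoneCechUnit s := by rw [← hb, ← ht]; rfl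
        have hts := stoneCechUnit_inj hut
        apply Subtype.ext
        rw [← hs, ← ht, hts]
    rw [hkey]
    exact (isOpen_unit_singleton s).preimage hcont
  haveI : DiscreteTopology (Set.range AmkR) := discreteTopology_iff_isOpen_singleton.mpr hdisc
  obtain ⟨g, hgf⟩ := hC ⟨fun a => ((a.2.choose).length : ℝ), continuous_of_discreteTopology⟩
  apply main_lemma
  refine ⟨g, fun s => ?_⟩
  have h1 := hgf ⟨AmkR s, Set.mem_range_self s⟩
  have h2 : (Set.mem_range_self (f := AmkR) s).choose = s :=
    AmkR_inj (Set.mem_range_self (f := AmkR) s).choose_spec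
  simpa [ContinuousMap.coe_mk, h2] using h1
end

section
/- The plank 𝔸 is realcompact: there exist an index set ι and a closed embedding of 𝔸 into ℝ^ι (with the product topology). -/
open Set Topology

universe u

section RCaux

namespace RC


/-- basic clopen subsets of `βD` -/
def V (A : Set D) : Set betaD := closure (stoneCechUnit '' A)

lemma isClosed_V (A : Set D) : IsClosed (V A) := isClosed_closure

lemma subset_V {A : Set D} {s : D} (h : s ∈ A) : stoneCechUnit s ∈ V A :=
  subset_closure ⟨s, h, rfl⟩

lemma V_union (A B : Set D) : V (A ∪ B) = V A ∪ V B := by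
  simp [V, image_union, closure_union]

lemma V_univ : V univ = univ := by
  have := denseRange_stoneCechUnit (α := D)
  simpa [V, image_univ] using this.closure_range

lemma V_disjoint {A B : Set D} (h : Disjoint A B) : V A ∩ V B = ∅ := by
  classical
  set f : D → Bool := fun s => decide (s ∈ A) with hf
  have hcf : Continuous f := continuous_of_discreteTopology
  set g := stoneCechExtend hcf with hg
  have hgc : Continuous g := continuous_stoneCechExtend hcf
  have hA : V A ⊆ g ⁻¹' {true} := by
    apply closure_minimal _ (IsClosed.preimage hgc (isClosed_discrete _))
    rintro _ ⟨s, hs, rfl⟩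
    have : g (stoneCechUnit s) = f s := congrFun (stoneCechExtend_extends hcf) s
    simp [this, hf, hs]
  have hB : V B ⊆ g ⁻¹' {false} := by
    apply closure_minimal _ (IsClosed.preimage hgc (isClosed_discrete _))
    rintro _ ⟨s, hs, rfl⟩
    have : g (stoneCechUnit s) = f s := congrFun (stoneCechExtend_extends hcf) s
    have hsA : s ∉ A := fun hsA => (h.ne_of_mem hsA hs) rfl
    simp [this, hf, hsA]
  ext q; simp only [mem_inter_iff, mem_empty_iff_false, iff_false, not_and]
  intro hq1 hq2
  have := hA hq1; have := hB hq2
  simp_all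

lemma V_compl_union (A : Set D) : V A ∪ V Aᶜ = univ := by
  rw [← V_union]; simp [V_univ]

lemma isClopen_V (A : Set D) : IsClopen (V A) := by
  refine ⟨isClosed_V A, ?_⟩
  have h1 : V A = (V Aᶜ)ᶜ ∪ (V A ∩ V Aᶜ) := by
    have := V_compl_union A
    ext q
    constructor
    · intro hq
      by_cases h2 : q ∈ V Aᶜ
      · exact Or.inr ⟨hq, h2⟩
      · exact Or.inl h2
    · rintro (hq | hq)
      · have : q ∈ V A ∪ V Aᶜ := this ▸ mem_univ q
        rcases this with h | h
        · exact h
        · exact absurd h hq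
      · exact hq.1
  rw [h1, V_disjoint (disjoint_compl_right (a := A)), union_empty]
  exact (isClosed_V Aᶜ).isOpen_compl

lemma unit_notMem_V {A : Set D} {s : D} (h : s ∉ A) : stoneCechUnit s ∉ V A := by
  intro hmem
  have h2 : stoneCechUnit s ∈ V {s} := subset_V rfl
  have := V_disjoint (A := {s}) (B := A) (by simpa using h)
  have : stoneCechUnit s ∈ V {s} ∩ V A := ⟨h2, hmem⟩
  rw [V_disjoint (A := ({s} : Set D)) (B := A) (by simpa using h)] at this
  exact this

/-- clopen base of βD -/
lemma exists_V_base {q : betaD} {U : Set betaD} (hU : IsOpen U) (hq : q ∈ U) :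
    ∃ A : Set D, q ∈ V A ∧ V A ⊆ U := by
  obtain ⟨f, hf0, hf1, hfc⟩ : ∃ f : betaD → ℝ, f q = 0 ∧ (∀ r ∈ Uᶜ, f r = 1) ∧ Continuous f := by
    obtain ⟨f, hfs, hft, _⟩ := exists_continuous_zero_one_of_isClosed
      (isClosed_singleton (x := q)) hU.isClosed_compl
      (by simpa [disjoint_singleton_left] using hq)
    exact ⟨f, hfs rfl, fun r hr => hft hr, f.continuous⟩
  classical
  refine ⟨{s : D | f (stoneCechUnit s) < 1/2}, ?_, ?_⟩
  · by_contra h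
    have : q ∈ V {s : D | f (stoneCechUnit s) < 1/2}ᶜ := by
      have := V_compl_union {s : D | f (stoneCechUnit s) < 1/2}
      rcases (this ▸ mem_univ q : q ∈ _) with h1 | h1
      · exact absurd h1 h
      · exact h1
    have hsub : V {s : D | f (stoneCechUnit s) < 1/2}ᶜ ⊆ f ⁻¹' {y : ℝ | 1/2 ≤ y} := by
      apply closure_minimal _ (IsClosed.preimage hfc (isClosed_le continuous_const continuous_id))
      rintro _ ⟨s, hs, rfl⟩
      simpa using not_lt.mp (by simpa using hs)
    have := hsub this
    simp [hf0] at this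
    linarith
  · intro r hr
    have hsub : V {s : D | f (stoneCechUnit s) < 1/2} ⊆ f ⁻¹' {y : ℝ | y ≤ 1/2} := by
      apply closure_minimal _ (IsClosed.preimage hfc (isClosed_le continuous_id continuous_const))
      rintro _ ⟨s, hs, rfl⟩
      have : f (stoneCechUnit s) < 1/2 := hs
      simpa using le_of_lt this
    by_contra hru
    have := hf1 r hru
    have := hsub hr
    simp [this] at *
    linarith

-- Λ lemmas
lemma Lam.isOpen_iff {U : Set Lam} :
    IsOpen U ↔ (Lam.infty ∈ U → {x : ℕ → Bool | Lam.mk x ∉ U}.Countable) := Iff.rfl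

lemma Lam.isOpen_not_infty {U : Set Lam} (h : Lam.infty ∉ U) : IsOpen U :=
  Lam.isOpen_iff.mpr (fun h' => absurd h' h)

lemma Lam.cases (l : Lam) : l = Lam.infty ∨ ∃ x, l = Lam.mk x := by
  cases l with
  | none => exact Or.inl rfl
  | some x => exact Or.inr ⟨x, rfl⟩

lemma Lam.mk_ne_infty (x : ℕ → Bool) : Lam.mk x ≠ Lam.infty := by
  intro h; exact Option.some_ne_none x h

lemma Lam.mk_inj {x y : ℕ → Bool} (h : Lam.mk x = Lam.mk y) : x = y :=
  Option.some_injective _ h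

lemma Lam.isClopen_mk_singleton (x : ℕ → Bool) : IsClopen ({Lam.mk x} : Set Lam) := by
  constructor
  · rw [← isOpen_compl_iff]
    refine Lam.isOpen_iff.mpr (fun _ => ?_)
    have : {y : ℕ → Bool | Lam.mk y ∉ ({Lam.mk x} : Set Lam)ᶜ} ⊆ {x} := by
      intro y hy
      simp only [mem_setOf_eq, mem_compl_iff, not_not, mem_singleton_iff] at hy ⊢
      exact Lam.mk_inj hy
    exact (countable_singleton x).mono this
  · exact Lam.isOpen_not_infty (by simp only [mem_singleton_iff]; exact fun h => Lam.mk_ne_infty x h.symm)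

lemma Lam.isClopen_of_infty_mem {U : Set Lam} (hU : IsOpen U) (h : Lam.infty ∈ U) :
    IsClopen U :=
  ⟨⟨Lam.isOpen_not_infty (by simp [h])⟩, hU⟩

lemma Lam.countable_of_closed_not_infty {T : Set Lam} (hT : IsClosed T) (h : Lam.infty ∉ T) :
    T.Countable := by
  have hco : {x : ℕ → Bool | Lam.mk x ∉ Tᶜ}.Countable := Lam.isOpen_iff.mp hT.isOpen_compl h
  have : T ⊆ Lam.mk '' {x : ℕ → Bool | Lam.mk x ∈ T} := by
    intro l hl
    rcases Lam.cases l with rfl | ⟨x, rfl⟩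
    · exact absurd hl h
    · exact ⟨x, hl, rfl⟩
  exact (Countable.image (by simpa using hco) _).mono this

-- strings and wedges
def Ext (σ : List Bool) : Set D := {s : D | σ <+: s}

lemma Ext_split (σ : List Bool) :
    Ext σ = {σ} ∪ (Ext (σ ++ [false]) ∪ Ext (σ ++ [true])) := by
  ext s
  simp only [Ext, mem_setOf_eq, mem_union, mem_singleton_iff]
  constructor
  · rintro ⟨t, rfl⟩
    cases t with
    | nil => exact Or.inl (by simp)
    | cons b t' =>
      cases b
      · exact Or.inr (Or.inl ⟨t', by simp⟩)
      · exact Or.inr (Or.inr ⟨t', by simp⟩)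
  · rintro (rfl | (⟨t, rfl⟩ | ⟨t, rfl⟩))
    · exact List.prefix_rfl
    · exact ⟨[false] ++ t, by simp⟩
    · exact ⟨[true] ++ t, by simp⟩

lemma Ext_disjoint {σ τ : List Bool} (hlen : σ.length = τ.length) (hne : σ ≠ τ) :
    Disjoint (Ext σ) (Ext τ) := by
  rw [Set.disjoint_left]
  intro s hs ht
  rcases (List.prefix_or_prefix_of_prefix hs ht) with h | h
  · exact hne (List.IsPrefix.eq_of_length h (by omega))
  · exact hne (List.IsPrefix.eq_of_length h (by omega)).symm

lemma wedge_eq_Ext (x : ℕ → Bool) (n : ℕ) :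
    wedge x n = Ext (List.ofFn fun i : Fin n => x i) := rfl

lemma wedge_zero (x : ℕ → Bool) : wedge x 0 = univ := by
  ext s; simp [wedge, List.nil_prefix]

lemma K_eq (x : ℕ → Bool) : K x = ⋂ n : ℕ, V (wedge x n) := rfl

lemma K_disjoint {x y : ℕ → Bool} (h : x ≠ y) : K x ∩ K y = ∅ := by
  obtain ⟨n, hn⟩ : ∃ n, x n ≠ y n := by
    by_contra hc; push_neg at hc; exact h (funext hc)
  have hlists : (List.ofFn fun i : Fin (n+1) => x i) ≠ (List.ofFn fun i : Fin (n+1) => y i) := by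
    intro heq
    have := List.ofFn_inj.mp heq
    exact hn (congrFun this ⟨n, Nat.lt_succ_self n⟩)
  have hd : Disjoint (wedge x (n+1)) (wedge y (n+1)) := by
    rw [wedge_eq_Ext, wedge_eq_Ext]
    exact Ext_disjoint (by simp) hlists
  have := V_disjoint hd
  apply eq_empty_of_subset_empty
  intro q hq
  rw [← this]
  exact ⟨(K_eq x ▸ hq.1 : q ∈ _) |> fun hh => by exact mem_iInter.mp hh (n+1),
         (K_eq y ▸ hq.2 : q ∈ _) |> fun hh => by exact mem_iInter.mp hh (n+1)⟩

lemma unit_notMem_V_wedge (s : D) (x : ℕ → Bool) :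
    stoneCechUnit s ∉ V (wedge x (s.length + 1)) := by
  apply unit_notMem_V
  intro hmem
  have := List.IsPrefix.length_le hmem
  simp at this

-- plank basics
lemma continuous_p1 : Continuous (fun a : Aplank => a.1.1) :=
  continuous_fst.comp continuous_subtype_val

lemma continuous_p2 : Continuous (fun a : Aplank => a.1.2) :=
  continuous_snd.comp continuous_subtype_val

lemma V_singleton (s : D) : V ({s} : Set D) = {stoneCechUnit s} := by
  simp [V, image_singleton]

lemma isClopen_unit_singleton (s : D) : IsClopen ({stoneCechUnit s} : Set betaD) :=
  V_singleton s ▸ isClopen_V {s}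

def LamS (s : D) : Set Aplank := {a | a.1.2 = stoneCechUnit s}

lemma isClopen_LamS (s : D) : IsClopen (LamS s) :=
  (isClopen_unit_singleton s).preimage continuous_p2

def Pfib (x : ℕ → Bool) : Set Aplank := {a | a.1.1 = Lam.mk x}

lemma isClopen_Pfib (x : ℕ → Bool) : IsClopen (Pfib x) :=
  (Lam.isClopen_mk_singleton x).preimage continuous_p1

def CwS (x : ℕ → Bool) (n : ℕ) : Set Aplank := {a | a.1.2 ∈ V (wedge x n)}

lemma isClopen_CwS (x : ℕ → Bool) (n : ℕ) : IsClopen (CwS x n) :=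
  (isClopen_V (wedge x n)).preimage continuous_p2

def ExtS (σ : List Bool) : Set Aplank := {a | a.1.2 ∈ V (Ext σ)}

lemma isClopen_ExtS (σ : List Bool) : IsClopen (ExtS σ) :=
  (isClopen_V (Ext σ)).preimage continuous_p2

/-- isolated points of the plank -/
def pt (x : ℕ → Bool) (s : D) : Aplank := ⟨(Lam.mk x, stoneCechUnit s), Or.inl ⟨s, rfl⟩⟩

lemma isClopen_pt (x : ℕ → Bool) (s : D) : IsClopen ({pt x s} : Set Aplank) := by
  have : ({pt x s} : Set Aplank) = Pfib x ∩ LamS s := by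
    ext a
    simp only [mem_singleton_iff, mem_inter_iff, Pfib, LamS, mem_setOf_eq]
    constructor
    · rintro rfl; exact ⟨rfl, rfl⟩
    · rintro ⟨h1, h2⟩
      exact Subtype.ext (Prod.ext h1 h2)
  rw [this]
  exact (isClopen_Pfib x).inter (isClopen_LamS s)

def Q (x : ℕ → Bool) : Set Aplank := {a | a.1.1 = Lam.mk x ∧ a.1.2 ∈ K x}

lemma isCompact_Q (x : ℕ → Bool) : IsCompact (Q x) := by
  have hK : IsCompact (K x) := by
    have : IsClosed (K x) := isClosed_iInter (fun n => isClosed_closure)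
    exact this.isCompact
  haveI : CompactSpace (K x) := isCompact_iff_compactSpace.mp hK
  set k : K x → Aplank := fun q => ⟨(Lam.mk x, q.1), Or.inr ⟨x, rfl, q.2⟩⟩ with hk
  have hcont : Continuous k := by
    apply Continuous.subtype_mk
    exact continuous_const.prodMk continuous_subtype_val
  have hrange : Q x = Set.range k := by
    ext a
    constructor
    · rintro ⟨h1, h2⟩
      refine ⟨⟨a.1.2, h2⟩, ?_⟩
      apply Subtype.ext
      exact (Prod.ext h1 rfl : (a : Lam × betaD) = (Lam.mk x, a.1.2)).symm
    · rintro ⟨q, rfl⟩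
      exact ⟨rfl, q.2⟩
  rw [hrange]
  exact isCompact_range hcont

section Key

variable {F : Set (Set Aplank)}
variable (hclop : ∀ C ∈ F, IsClopen C)
variable (huniv : (univ : Set Aplank) ∈ F)
variable (hinter : ∀ C ∈ F, ∀ C' ∈ F, C ∩ C' ∈ F)
variable (hcompl : ∀ C : Set Aplank, IsClopen C → C ∉ F → Cᶜ ∈ F)
variable (hcip : ∀ g : ℕ → Set Aplank, (∀ n, g n ∈ F) → (⋂ n, g n).Nonempty)

include hcip in
lemma F_nonempty : ∀ C ∈ F, C.Nonempty := by
  intro C hC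
  have := hcip (fun _ => C) (fun _ => hC)
  rwa [iInter_const] at this

include hinter hcompl hcip in
lemma F_principal_of_countable {C : Set Aplank} (hC : C ∈ F) (hcnt : C.Countable)
    (hiso : ∀ a ∈ C, IsClopen ({a} : Set Aplank)) :
    ∃ a : Aplank, ∀ C' ∈ F, a ∈ C' := by
  by_cases hsing : ∃ a ∈ C, ({a} : Set Aplank) ∈ F
  · obtain ⟨a, _, ha⟩ := hsing
    refine ⟨a, fun C' hC' => ?_⟩
    obtain ⟨b, hb1, hb2⟩ := F_nonempty hcip _ (hinter _ ha _ hC')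
    rwa [mem_singleton_iff.mp hb1] at hb2
  · exfalso
    push_neg at hsing
    obtain ⟨a0, ha0⟩ := F_nonempty hcip _ hC
    obtain ⟨f, hf⟩ := Set.Countable.exists_eq_range hcnt ⟨a0, ha0⟩
    have hmemf : ∀ n, f n ∈ C := fun n => hf ▸ ⟨n, rfl⟩
    have hg : ∀ n, C ∩ ({f n} : Set Aplank)ᶜ ∈ F := by
      intro n
      exact hinter _ hC _ (hcompl _ (hiso _ (hmemf n)) (hsing _ (hmemf n)))
    obtain ⟨a, ha⟩ := hcip _ hg
    have haC : a ∈ C := (mem_iInter.mp ha 0).1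
    obtain ⟨n, rfl⟩ := hf ▸ haC
    exact (mem_iInter.mp ha n).2 rfl

include hclop hinter hcompl hcip in
lemma F_case1 (hs : ∃ s : D, LamS s ∈ F) : ∃ a : Aplank, ∀ C' ∈ F, a ∈ C' := by
  obtain ⟨s, hs⟩ := hs
  by_cases hii : ∃ C ∈ F, C ⊆ LamS s ∧ AmkR s ∉ C
  · obtain ⟨C, hC, hsub, hinf⟩ := hii
    -- every point of C is isolated
    have hform : ∀ a ∈ C, ∃ x : ℕ → Bool, a = pt x s := by
      intro a ha
      have h2 : a.1.2 = stoneCechUnit s := hsub ha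
      rcases Lam.cases a.1.1 with h1 | ⟨x, h1⟩
      · exfalso
        apply hinf
        have : a = AmkR s := Subtype.ext (Prod.ext h1 h2)
        rwa [this] at ha
      · exact ⟨x, Subtype.ext (Prod.ext h1 h2)⟩
    have hiso : ∀ a ∈ C, IsClopen ({a} : Set Aplank) := by
      intro a ha
      obtain ⟨x, rfl⟩ := hform a ha
      exact isClopen_pt x s
    -- C is countable
    set j : Lam → Aplank := fun l => ⟨(l, stoneCechUnit s), Or.inl ⟨s, rfl⟩⟩ with hj
    have hjc : Continuous j := by
      apply Continuous.subtype_mk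
      exact continuous_id.prodMk continuous_const
    have hTclosed : IsClosed (j ⁻¹' C) := (hclop C hC).1.preimage hjc
    have hTinf : Lam.infty ∉ j ⁻¹' C := hinf
    have hTcnt := Lam.countable_of_closed_not_infty hTclosed hTinf
    have hCsub : C ⊆ j '' (j ⁻¹' C) := by
      intro a ha
      refine ⟨a.1.1, ?_, ?_⟩
      · show j a.1.1 ∈ C
        have : j a.1.1 = a := Subtype.ext (Prod.ext rfl (hsub ha).symm)
        rwa [this]
      · exact Subtype.ext (Prod.ext rfl (hsub ha).symm)
    exact F_principal_of_countable hinter hcompl hcip hC ((hTcnt.image j).mono hCsub) hiso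
  · push_neg at hii
    refine ⟨AmkR s, fun C' hC' => ?_⟩
    have h1 : C' ∩ LamS s ∈ F := hinter _ hC' _ hs
    exact (hii _ h1 (inter_subset_right)).1

include hclop huniv hinter hcompl hcip in
lemma F_case2 (hx : ∃ x : ℕ → Bool, Pfib x ∈ F) : ∃ a : Aplank, ∀ C' ∈ F, a ∈ C' := by
  obtain ⟨x, hx⟩ := hx
  by_cases hA : ∃ n : ℕ, (CwS x n)ᶜ ∩ Pfib x ∈ F
  · obtain ⟨n, hn⟩ := hA
    have hform : ∀ a ∈ (CwS x n)ᶜ ∩ Pfib x, ∃ s : D, a = pt x s := by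
      rintro a ⟨hcw, hpf⟩
      rcases a.2 with ⟨s, h2⟩ | ⟨x', h1, h2⟩
      · exact ⟨s, Subtype.ext (Prod.ext hpf h2)⟩
      · exfalso
        apply hcw
        have hxx : x' = x := Lam.mk_inj (h1.symm.trans hpf)
        subst hxx
        exact mem_iInter.mp (show a.1.2 ∈ ⋂ n, V (wedge x' n) from h2) n
    have hiso : ∀ a ∈ (CwS x n)ᶜ ∩ Pfib x, IsClopen ({a} : Set Aplank) := by
      intro a ha
      obtain ⟨s, rfl⟩ := hform a ha
      exact isClopen_pt x s
    have hcnt : ((CwS x n)ᶜ ∩ Pfib x).Countable := by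
      have : (CwS x n)ᶜ ∩ Pfib x ⊆ Set.range (fun s : D => pt x s) := by
        intro a ha
        obtain ⟨s, rfl⟩ := hform a ha
        exact ⟨s, rfl⟩
      exact (Set.countable_range _).mono this
    exact F_principal_of_countable hinter hcompl hcip hn hcnt hiso
  · push_neg at hA
    have hcw : ∀ n : ℕ, CwS x n ∈ F := by
      intro n
      by_contra hc
      exact hA n (hinter _ (hcompl _ (isClopen_CwS x n) hc) _ hx)
    -- compactness argument
    have hQF : ∀ C ∈ F, (C ∩ Q x).Nonempty := by
      intro C hC
      classical
      set g : ℕ → Set Aplank := fun n => Nat.rec (C ∩ Pfib x) (fun m _ => CwS x m) n with hg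
      have hgF : ∀ n, g n ∈ F := by
        intro n
        cases n with
        | zero => exact hinter _ hC _ hx
        | succ m => exact hcw m
      obtain ⟨a, ha⟩ := hcip g hgF
      refine ⟨a, (mem_iInter.mp ha 0).1, (mem_iInter.mp ha 0).2, ?_⟩
      rw [K_eq]
      rw [mem_iInter]
      intro n
      exact (mem_iInter.mp ha (n+1))
    by_contra hcon
    push_neg at hcon
    have hempty : (Q x ∩ ⋂ (C : {C // C ∈ F}), C.1) = ∅ := by
      rw [eq_empty_iff_forall_notMem]
      rintro a ⟨haQ, haI⟩
      obtain ⟨C', hC', hnot⟩ := hcon a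
      exact hnot (mem_iInter.mp haI ⟨C', hC'⟩)
    obtain ⟨u, hu⟩ := (isCompact_Q x).elim_finite_subfamily_closed
      (fun C : {C // C ∈ F} => C.1) (fun C => (hclop _ C.2).1) hempty
    -- the finite intersection is in F, hence meets Q x : contradiction
    have hfin : ∀ v : Finset {C // C ∈ F}, (⋂ C ∈ v, C.1) ∈ F := by
      intro v
      classical
      induction v using Finset.induction_on with
      | empty => simpa using huniv
      | @insert Cc v' hni ih =>
        rw [Finset.set_biInter_insert]
        exact hinter _ Cc.2 _ ih
    obtain ⟨a, ha1, ha2⟩ := hQF _ (hfin u)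
    rw [eq_empty_iff_forall_notMem] at hu
    exact hu a ⟨ha2, ha1⟩

include hclop huniv hinter hcompl hcip in
lemma F_case3 (hS : ∀ s : D, LamS s ∉ F) (hP : ∀ x : ℕ → Bool, Pfib x ∉ F) : False := by
  classical
  have hbase : ExtS [] ∈ F := by
    have : ExtS [] = univ := by
      have h1 : Ext [] = (univ : Set D) := by
        ext t; simp [Ext]
      simp only [ExtS, h1, V_univ]
      rfl
    rw [this]; exact huniv
  have step : ∀ σ : List Bool, ExtS σ ∈ F → ∃ b : Bool, ExtS (σ ++ [b]) ∈ F := by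
    intro σ hσ
    by_contra hc
    push_neg at hc
    have h0 : (ExtS (σ ++ [false]))ᶜ ∈ F := hcompl _ (isClopen_ExtS _) (hc false)
    have h1 : (ExtS (σ ++ [true]))ᶜ ∈ F := hcompl _ (isClopen_ExtS _) (hc true)
    have h2 : (LamS σ)ᶜ ∈ F := hcompl _ (isClopen_LamS σ) (hS σ)
    obtain ⟨a, ha⟩ := F_nonempty hcip _
      (hinter _ (hinter _ (hinter _ hσ _ h2) _ h0) _ h1)
    obtain ⟨⟨⟨haσ, haL⟩, haf⟩, hat⟩ := ha
    have hsplit : a.1.2 ∈ V ({σ} : Set D) ∪ (V (Ext (σ ++ [false])) ∪ V (Ext (σ ++ [true]))) := by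
      have := Ext_split σ
      have h3 : V (Ext σ) = V ({σ} : Set D) ∪ (V (Ext (σ ++ [false])) ∪ V (Ext (σ ++ [true]))) := by
        rw [this, V_union, V_union]
      rw [← h3]
      exact haσ
    rcases hsplit with h | (h | h)
    · rw [V_singleton] at h
      exact haL h
    · exact haf h
    · exact hat h
  have step' : ∀ σ : List Bool, ExtS σ ∈ F → { b : Bool // ExtS (σ ++ [b]) ∈ F } :=
    fun σ h => ⟨(step σ h).choose, (step σ h).choose_spec⟩
  let f : ∀ n : ℕ, { σ : List Bool // σ.length = n ∧ ExtS σ ∈ F } :=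
    fun n => Nat.rec ⟨[], rfl, hbase⟩
      (fun m p => ⟨p.1 ++ [(step' p.1 p.2.2).1], by simp [p.2.1], (step' p.1 p.2.2).2⟩) n
  set y : ℕ → Bool := fun n => (step' (f n).1 (f n).2.2).1 with hy
  have hsucc : ∀ n, (f (n+1)).1 = (f n).1 ++ [y n] := fun n => rfl
  have hofn : ∀ n, (f n).1 = List.ofFn (fun i : Fin n => y i) := by
    intro n
    induction n with
    | zero => simp [f]
    | succ m ih =>
      rw [hsucc, ih]
      rw [List.ofFn_succ']
      simp [List.concat_eq_append]
  have hCwF : ∀ n, CwS y n ∈ F := by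
    intro n
    have : CwS y n = ExtS (f n).1 := by
      rw [hofn]
      rfl
    rw [this]
    exact (f n).2.2
  have hPy : (Pfib y)ᶜ ∈ F := hcompl _ (isClopen_Pfib y) (hP y)
  set g : ℕ → Set Aplank := fun n => Nat.rec ((Pfib y)ᶜ) (fun m _ => CwS y m) n with hg
  have hgF : ∀ n, g n ∈ F := by
    intro n
    cases n with
    | zero => exact hPy
    | succ m => exact hCwF m
  obtain ⟨a, ha⟩ := hcip g hgF
  have haP : a ∉ Pfib y := mem_iInter.mp ha 0
  have haK : a.1.2 ∈ K y := by
    rw [K_eq, mem_iInter]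
    intro n
    exact mem_iInter.mp ha (n+1)
  rcases a.2 with ⟨s, h2⟩ | ⟨x, h1, h2⟩
  · have := mem_iInter.mp (K_eq y ▸ haK) (s.length + 1)
    rw [h2] at this
    exact unit_notMem_V_wedge s y this
  · have hxy : x ≠ y := by
      intro h; subst h; exact haP h1
    have := K_disjoint hxy
    rw [eq_empty_iff_forall_notMem] at this
    exact this a.1.2 ⟨h2, haK⟩

include hclop huniv hinter hcompl hcip in
lemma F_key : ∃ a : Aplank, ∀ C' ∈ F, a ∈ C' := by
  by_cases h1 : ∃ s : D, LamS s ∈ F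
  · exact F_case1 hclop hinter hcompl hcip h1
  by_cases h2 : ∃ x : ℕ → Bool, Pfib x ∈ F
  · exact F_case2 hclop huniv hinter hcompl hcip h2
  · push_neg at h1 h2
    exact absurd (F_case3 hclop huniv hinter hcompl hcip h1 h2) (by simp)

end Key

-- clopen base of the plank
lemma clopen_base {a : Aplank} {U : Set Aplank} (hU : IsOpen U) (ha : a ∈ U) :
    ∃ C : Set Aplank, IsClopen C ∧ a ∈ C ∧ C ⊆ U := by
  obtain ⟨W, hW, hUW⟩ := isOpen_induced_iff.mp hU
  have haW : (a : Lam × betaD) ∈ W := by rw [← hUW] at ha; exact ha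
  obtain ⟨O1, O2, hO1, hO2, h11, h22, hsub⟩ := isOpen_prod_iff.mp hW a.1.1 a.1.2 haW
  obtain ⟨T1, hT1, haT1, hT1sub⟩ : ∃ T1 : Set Lam, IsClopen T1 ∧ a.1.1 ∈ T1 ∧ T1 ⊆ O1 := by
    rcases Lam.cases a.1.1 with h | ⟨x, h⟩
    · exact ⟨O1, Lam.isClopen_of_infty_mem hO1 (h ▸ h11), h11, subset_rfl⟩
    · refine ⟨{Lam.mk x}, Lam.isClopen_mk_singleton x, by rw [h]; exact Set.mem_singleton _, ?_⟩
      intro l hl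
      rw [mem_singleton_iff] at hl
      subst hl
      rw [← h]
      exact h11
  obtain ⟨A, haA, hAsub⟩ := exists_V_base hO2 h22
  refine ⟨Subtype.val ⁻¹' (T1 ×ˢ V A), (hT1.prod (isClopen_V A)).preimage continuous_subtype_val,
    ⟨haT1, haA⟩, ?_⟩
  intro c hc
  rw [← hUW]
  exact hsub ⟨hT1sub hc.1, hAsub hc.2⟩

lemma clopen_sep {a b : Aplank} (hab : a ≠ b) :
    ∃ C : Set Aplank, IsClopen C ∧ a ∈ C ∧ b ∉ C := by
  by_cases h2 : a.1.2 = b.1.2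
  · have h1 : a.1.1 ≠ b.1.1 := by
      intro h
      exact hab (Subtype.ext (Prod.ext h h2))
    rcases Lam.cases a.1.1 with h | ⟨x, h⟩
    · rcases Lam.cases b.1.1 with h' | ⟨x, h'⟩
      · exact absurd (h.trans h'.symm) h1
      · refine ⟨(Pfib x)ᶜ, (isClopen_Pfib x).compl, ?_, by simp [Pfib, h']⟩
        simp only [mem_compl_iff, Pfib, mem_setOf_eq, h]
        exact fun hc => Lam.mk_ne_infty x hc.symm
    · exact ⟨Pfib x, isClopen_Pfib x, h, fun hc => h1 (h.trans (hc : b.1.1 = Lam.mk x).symm)⟩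
  · obtain ⟨U, Vo, hU, hV, haU, hbV, hdisj⟩ := t2_separation h2
    obtain ⟨A, haA, hAsub⟩ := exists_V_base hU haU
    refine ⟨(fun c : Aplank => c.1.2) ⁻¹' V A, (isClopen_V A).preimage continuous_p2, haA, ?_⟩
    intro hc
    exact (Set.disjoint_left.mp hdisj (hAsub hc)) hbV

-- the coordinate system
attribute [local instance] Classical.propDecidable

def Clp : Type := {C : Set Aplank // IsClopen C}
def Bad : Type := {g : ℕ → Clp // (⋂ n, (g n).1) = ∅}
def Idx : Type := Clp ⊕ Bad

noncomputable def chi (C : Set Aplank) (a : Aplank) : ℝ := if a ∈ C then 1 else 0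

lemma bad_exists (b : Bad) (a : Aplank) : ∃ n, a ∉ (b.1 n).1 := by
  by_contra h
  push_neg at h
  have : a ∈ ⋂ n, (b.1 n).1 := mem_iInter.mpr h
  rw [b.2] at this
  exact this

noncomputable def idxFun (a : Aplank) : Idx → ℝ :=
  fun i => match i with
  | Sum.inl C => chi C.1 a
  | Sum.inr b => (Nat.find (bad_exists b a) : ℝ)

lemma continuous_chi {C : Set Aplank} (hC : IsClopen C) : Continuous (chi C) := by
  apply IsLocallyConstant.continuous
  intro s
  classical
  have : chi C ⁻¹' s =
      (if (1:ℝ) ∈ s then C else ∅) ∪ (if (0:ℝ) ∈ s then Cᶜ else ∅) := by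
    ext a
    by_cases haC : a ∈ C <;> by_cases h1 : (1:ℝ) ∈ s <;> by_cases h0 : (0:ℝ) ∈ s <;>
      simp [chi, haC, h1, h0] <;> tauto
  rw [this]
  apply IsOpen.union
  · split
    · exact hC.2
    · exact isOpen_empty
  · split
    · exact hC.compl.2
    · exact isOpen_empty

lemma continuous_nfind (b : Bad) : Continuous (fun a => (Nat.find (bad_exists b a) : ℝ)) := by
  apply IsLocallyConstant.continuous
  intro s
  have heq : (fun a => ((Nat.find (bad_exists b a) : ℕ) : ℝ)) ⁻¹' s =
      ⋃ k ∈ {k : ℕ | (k : ℝ) ∈ s}, {a : Aplank | Nat.find (bad_exists b a) = k} := by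
    ext a
    simp only [mem_preimage, mem_iUnion, mem_setOf_eq, exists_prop]
    constructor
    · intro h
      exact ⟨Nat.find (bad_exists b a), h, rfl⟩
    · rintro ⟨k, hk, hfind⟩
      rw [hfind]
      exact hk
  rw [heq]
  apply isOpen_biUnion
  intro k _
  have : {a : Aplank | Nat.find (bad_exists b a) = k} =
      (⋂ i ∈ Finset.range k, (b.1 i).1) ∩ ((b.1 k).1)ᶜ := by
    ext a
    simp only [Nat.find_eq_iff, mem_setOf_eq, mem_inter_iff, mem_iInter, Finset.mem_range,
      mem_compl_iff]
    constructor
    · rintro ⟨hk, hm⟩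
      exact ⟨fun i hi => not_not.mp (hm i hi), hk⟩
    · rintro ⟨hm, hk⟩
      exact ⟨hk, fun m hmk => not_not.mpr (hm m hmk)⟩
  rw [this]
  apply IsOpen.inter
  · exact isOpen_biInter_finset (fun i _ => (b.1 i).2.2)
  · exact (b.1 k).2.compl.2

lemma continuous_idxFun : Continuous idxFun := by
  apply continuous_pi
  rintro (C | b)
  · exact continuous_chi C.2
  · exact continuous_nfind b

lemma approx {φ : Idx → ℝ} (hφ : φ ∈ closure (Set.range idxFun)) (t : Finset Idx) {ε : ℝ}
    (hε : 0 < ε) : ∃ a : Aplank, ∀ i ∈ t, |idxFun a i - φ i| < ε := by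
  have hnb : {ψ : Idx → ℝ | ∀ i ∈ t, |ψ i - φ i| < ε} ∈ 𝓝 φ := by
    have hopen : IsOpen {ψ : Idx → ℝ | ∀ i ∈ t, |ψ i - φ i| < ε} := by
      have : {ψ : Idx → ℝ | ∀ i ∈ t, |ψ i - φ i| < ε} =
          ⋂ i ∈ t, (fun ψ : Idx → ℝ => ψ i) ⁻¹' Metric.ball (φ i) ε := by
        ext ψ
        simp [Metric.mem_ball, Real.dist_eq]
      rw [this]
      exact isOpen_biInter_finset (fun i _ => (continuous_apply i).isOpen_preimage _
        Metric.isOpen_ball)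
    exact hopen.mem_nhds (fun i _ => by simpa using hε)
  obtain ⟨ψ, hψ1, hψ2⟩ := mem_closure_iff_nhds.mp hφ _ hnb
  obtain ⟨a, rfl⟩ := hψ2
  exact ⟨a, hψ1⟩

section ClosurePoint

variable {φ : Idx → ℝ}

/-- The clopen-ultrafilter associated with a closure point of the range. -/
def Fphi (φ : Idx → ℝ) : Set (Set Aplank) :=
  {S | ∃ h : IsClopen S, φ (Sum.inl ⟨S, h⟩) = 1}

lemma idxFun_inl (a : Aplank) (C : Clp) : idxFun a (Sum.inl C) = chi C.1 a := rfl

lemma chi_of_mem {C : Set Aplank} {a : Aplank} (h : a ∈ C) : chi C a = 1 := if_pos h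

lemma chi_of_not_mem {C : Set Aplank} {a : Aplank} (h : a ∉ C) : chi C a = 0 := if_neg h

lemma phi_approx2 (hφ : φ ∈ closure (Set.range idxFun)) (t0 t1 : Finset Clp)
    (h0 : ∀ C ∈ t0, φ (Sum.inl C) = 0) (h1 : ∀ C ∈ t1, φ (Sum.inl C) = 1)
    (j : Idx) {ε : ℝ} (hε : 0 < ε) :
    ∃ a : Aplank, (∀ C ∈ t0, a ∉ C.1) ∧ (∀ C ∈ t1, a ∈ C.1) ∧ |idxFun a j - φ j| < ε := by
  obtain ⟨a, ha⟩ := approx hφ (insert j (t0.image Sum.inl ∪ t1.image Sum.inl))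
    (lt_min hε (by norm_num : (0:ℝ) < 1/2))
  refine ⟨a, ?_, ?_, ?_⟩
  · intro C hC
    have := ha (Sum.inl C) (Finset.mem_insert_of_mem
      (Finset.mem_union_left _ (Finset.mem_image_of_mem _ hC)))
    rw [h0 C hC, idxFun_inl] at this
    intro hmem
    rw [chi_of_mem hmem] at this
    have := lt_of_lt_of_le this (min_le_right _ _)
    norm_num at this
  · intro C hC
    have := ha (Sum.inl C) (Finset.mem_insert_of_mem
      (Finset.mem_union_right _ (Finset.mem_image_of_mem _ hC)))
    rw [h1 C hC, idxFun_inl] at this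
    by_contra hmem
    rw [chi_of_not_mem hmem] at this
    have := lt_of_lt_of_le this (min_le_right _ _)
    norm_num at this
  · exact lt_of_lt_of_le (ha j (Finset.mem_insert_self _ _)) (min_le_left _ _)

lemma phi_binary (hφ : φ ∈ closure (Set.range idxFun)) (C : Clp) :
    φ (Sum.inl C) = 0 ∨ φ (Sum.inl C) = 1 := by
  by_contra hc
  push_neg at hc
  obtain ⟨h0, h1⟩ := hc
  have hε : 0 < min |φ (Sum.inl C) - 0| |φ (Sum.inl C) - 1| := by
    apply lt_min
    · simpa [abs_pos, sub_ne_zero] using fun h => h0 h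
    · simpa [abs_pos, sub_ne_zero] using h1
  obtain ⟨a, -, -, ha⟩ := phi_approx2 hφ ∅ ∅ (by simp) (by simp) (Sum.inl C) hε
  rw [idxFun_inl] at ha
  by_cases hm : a ∈ C.1
  · rw [chi_of_mem hm] at ha
    have h2 := lt_of_lt_of_le ha (min_le_right _ _)
    rw [abs_sub_comm] at h2
    exact absurd h2 (lt_irrefl _)
  · rw [chi_of_not_mem hm] at ha
    have h2 := lt_of_lt_of_le ha (min_le_left _ _)
    rw [abs_sub_comm] at h2
    exact absurd h2 (lt_irrefl _)

lemma phi_one_of_ne_zero (hφ : φ ∈ closure (Set.range idxFun)) {C : Clp}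
    (h : φ (Sum.inl C) ≠ 0) : φ (Sum.inl C) = 1 :=
  (phi_binary hφ C).resolve_left h

lemma Fphi_mem_iff (hφ : φ ∈ closure (Set.range idxFun)) {S : Set Aplank} (hS : IsClopen S) :
    S ∈ Fphi φ ↔ φ (Sum.inl ⟨S, hS⟩) = 1 := by
  constructor
  · rintro ⟨h, hval⟩
    exact hval
  · intro h
    exact ⟨hS, h⟩

lemma Fphi_clopen : ∀ S ∈ Fphi φ, IsClopen S := fun _ hS => hS.1

lemma Fphi_univ (hφ : φ ∈ closure (Set.range idxFun)) : (univ : Set Aplank) ∈ Fphi φ := by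
  refine ⟨isClopen_univ, ?_⟩
  apply phi_one_of_ne_zero hφ
  intro h0
  obtain ⟨a, -, -, ha⟩ := phi_approx2 hφ ∅ ∅ (by simp) (by simp)
    (Sum.inl ⟨univ, isClopen_univ⟩) (by norm_num : (0:ℝ) < 1/2)
  erw [idxFun_inl, chi_of_mem (mem_univ a), h0] at ha
  norm_num at ha

lemma Fphi_inter (hφ : φ ∈ closure (Set.range idxFun)) :
    ∀ S ∈ Fphi φ, ∀ S' ∈ Fphi φ, S ∩ S' ∈ Fphi φ := by
  rintro S ⟨hS, hSv⟩ S' ⟨hS', hSv'⟩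
  refine ⟨hS.inter hS', ?_⟩
  apply phi_one_of_ne_zero hφ
  intro h0
  obtain ⟨a, -, hmem, ha⟩ := phi_approx2 hφ ∅ ({⟨S, hS⟩, ⟨S', hS'⟩} : Finset Clp) (by simp)
    (by
      intro C hC
      rcases Finset.mem_insert.mp hC with rfl | hC
      · exact hSv
      · rw [Finset.mem_singleton.mp hC]
        exact hSv')
    (Sum.inl ⟨S ∩ S', hS.inter hS'⟩) (by norm_num : (0:ℝ) < 1/2)
  have haS : a ∈ S := hmem _ (Finset.mem_insert_self _ _)
  have haS' : a ∈ S' := hmem _ (Finset.mem_insert_of_mem (Finset.mem_singleton_self (⟨S', hS'⟩ : Clp)))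
  erw [idxFun_inl, chi_of_mem (show a ∈ S ∩ S' from ⟨haS, haS'⟩), h0] at ha
  norm_num at ha

lemma Fphi_compl (hφ : φ ∈ closure (Set.range idxFun)) :
    ∀ S : Set Aplank, IsClopen S → S ∉ Fphi φ → Sᶜ ∈ Fphi φ := by
  intro S hS hnot
  have h0 : φ (Sum.inl ⟨S, hS⟩) = 0 := by
    rcases phi_binary hφ ⟨S, hS⟩ with h | h
    · exact h
    · exact absurd ⟨hS, h⟩ hnot
  refine ⟨hS.compl, ?_⟩
  apply phi_one_of_ne_zero hφ
  intro hc0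
  obtain ⟨a, hnmem, -, ha⟩ := phi_approx2 hφ ({⟨S, hS⟩} : Finset Clp) ∅
    (by intro C hC; rw [Finset.mem_singleton.mp hC]; exact h0) (by simp)
    (Sum.inl ⟨Sᶜ, hS.compl⟩) (by norm_num : (0:ℝ) < 1/2)
  have : a ∉ S := hnmem _ (Finset.mem_singleton_self _)
  erw [idxFun_inl, chi_of_mem this, hc0] at ha
  norm_num at ha

lemma nat_find_ge {b : Bad} {a : Aplank} {N : ℕ} (h : ∀ n < N, a ∈ (b.1 n).1) :
    N ≤ Nat.find (bad_exists b a) := by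
  by_contra hc
  push_neg at hc
  exact Nat.find_spec (bad_exists b a) (h _ hc)

lemma Fphi_cip (hφ : φ ∈ closure (Set.range idxFun)) :
    ∀ g : ℕ → Set Aplank, (∀ n, g n ∈ Fphi φ) → (⋂ n, g n).Nonempty := by
  intro g hg
  rw [Set.nonempty_iff_ne_empty]
  intro hempty
  set gC : ℕ → Clp := fun n => ⟨g n, (hg n).1⟩ with hgC
  have hb : (⋂ n, (gC n).1) = ∅ := hempty
  set b : Bad := ⟨gC, hb⟩ with hbdef
  obtain ⟨N, hN⟩ := exists_nat_gt (φ (Sum.inr b) + 1)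
  obtain ⟨a, -, hmem, ha⟩ := phi_approx2 hφ ∅ ((Finset.range N).image gC) (by simp)
    (by
      intro C hC
      obtain ⟨n, -, rfl⟩ := Finset.mem_image.mp hC
      exact (hg n).2)
    (Sum.inr b) (by norm_num : (0:ℝ) < 1/2)
  have hfind : N ≤ Nat.find (bad_exists b a) := by
    apply nat_find_ge
    intro n hn
    exact hmem (gC n) (Finset.mem_image_of_mem _ (Finset.mem_range.mpr hn))
  have h1 : idxFun a (Sum.inr b) = (Nat.find (bad_exists b a) : ℝ) := rfl
  rw [h1] at ha
  have h2 : (N : ℝ) ≤ (Nat.find (bad_exists b a) : ℝ) := by exact_mod_cast hfind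
  have h3 : |(Nat.find (bad_exists b a) : ℝ) - φ (Sum.inr b)| < 1/2 := ha
  have := abs_lt.mp h3
  linarith

lemma phi_eq_eval (hφ : φ ∈ closure (Set.range idxFun)) :
    ∃ a : Aplank, idxFun a = φ := by
  obtain ⟨a, ha⟩ := F_key (Fphi_clopen (φ := φ)) (Fphi_univ hφ) (Fphi_inter hφ)
    (Fphi_compl hφ) (Fphi_cip hφ)
  have heval : ∀ C : Clp, φ (Sum.inl C) = chi C.1 a := by
    intro C
    rcases phi_binary hφ C with h | h
    · have hcompl : C.1ᶜ ∈ Fphi φ := Fphi_compl hφ C.1 C.2 (by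
        rintro ⟨hcl, hval⟩
        rw [show (⟨C.1, hcl⟩ : Clp) = C from rfl] at hval
        rw [hval] at h
        norm_num at h)
      have : a ∈ C.1ᶜ := ha _ hcompl
      rw [h, chi_of_not_mem this]
    · have : a ∈ C.1 := ha _ ⟨C.2, by rw [show (⟨C.1, C.2⟩ : Clp) = C from rfl]; exact h⟩
      rw [h, chi_of_mem this]
  refine ⟨a, funext ?_⟩
  rintro (C | b)
  · rw [idxFun_inl, heval]
  · -- the `Bad` coordinates
    set k := Nat.find (bad_exists b a) with hk
    have hka : a ∉ (b.1 k).1 := Nat.find_spec (bad_exists b a)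
    have hkl : ∀ n < k, a ∈ (b.1 n).1 := by
      intro n hn
      by_contra hc
      have h5 : k ≤ n := Nat.find_le hc
      omega
    have hzero : φ (Sum.inl (b.1 k)) = 0 := by
      rw [heval, chi_of_not_mem hka]
    have hone : ∀ n < k, φ (Sum.inl (b.1 n)) = 1 := by
      intro n hn
      rw [heval, chi_of_mem (hkl n hn)]
    have hval : idxFun a (Sum.inr b) = (k : ℝ) := rfl
    rw [hval]
    by_contra hne
    have hεpos : 0 < |(k : ℝ) - φ (Sum.inr b)| := by
      rw [abs_pos, sub_ne_zero]
      exact hne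
    obtain ⟨a', hn0, hn1, ha'⟩ := phi_approx2 hφ {b.1 k} ((Finset.range k).image (b.1 ∘ id))
      (by intro C hC; rw [Finset.mem_singleton.mp hC]; exact hzero)
      (by
        intro C hC
        obtain ⟨n, hn, rfl⟩ := Finset.mem_image.mp hC
        exact hone n (Finset.mem_range.mp hn))
      (Sum.inr b) hεpos
    have ha'k : a' ∉ (b.1 k).1 := hn0 _ (Finset.mem_singleton_self _)
    have ha'l : ∀ n < k, a' ∈ (b.1 n).1 := by
      intro n hn
      exact hn1 _ (Finset.mem_image_of_mem _ (Finset.mem_range.mpr hn))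
    have hfind' : Nat.find (bad_exists b a') = k := by
      have hge := nat_find_ge (b := b) (a := a') ha'l
      have hle : Nat.find (bad_exists b a') ≤ k := Nat.find_le ha'k
      omega
    have : idxFun a' (Sum.inr b) = (k : ℝ) := by
      show ((Nat.find (bad_exists b a') : ℕ) : ℝ) = (k : ℝ)
      rw [hfind']
    rw [this] at ha'
    exact absurd ha' (lt_irrefl _)

end ClosurePoint

lemma isClosed_range_idxFun : IsClosed (Set.range idxFun) := by
  rw [← closure_subset_iff_isClosed]
  intro φ hφ
  obtain ⟨a, ha⟩ := phi_eq_eval hφ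
  exact ⟨a, ha⟩

lemma injective_idxFun : Function.Injective idxFun := by
  intro a b hab
  by_contra hne
  obtain ⟨C, hC, haC, hbC⟩ := clopen_sep hne
  have := congrFun hab (Sum.inl ⟨C, hC⟩)
  erw [idxFun_inl, idxFun_inl, chi_of_mem haC, chi_of_not_mem hbC] at this
  norm_num at this

lemma isInducing_idxFun : Topology.IsInducing idxFun := by
  refine ⟨le_antisymm ?_ ?_⟩
  · exact continuous_iff_le_induced.mp continuous_idxFun
  · intro U hU
    rw [isOpen_induced_iff]
    classical
    refine ⟨⋃ (a : Aplank) (h : a ∈ U),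
      {ψ : Idx → ℝ | 1/2 < ψ (Sum.inl ⟨(clopen_base hU h).choose,
        (clopen_base hU h).choose_spec.1⟩)}, ?_, ?_⟩
    · apply isOpen_iUnion
      intro a
      apply isOpen_iUnion
      intro h
      exact (isOpen_lt' _).preimage (continuous_apply _)
    · ext c
      simp only [mem_preimage, mem_iUnion, mem_setOf_eq]
      constructor
      · rintro ⟨a, h, hc⟩
        obtain ⟨hclo, hmem, hsub⟩ := (clopen_base hU h).choose_spec
        erw [idxFun_inl] at hc
        by_cases hcC : c ∈ (clopen_base hU h).choose
        · exact hsub hcC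
        · rw [chi_of_not_mem hcC] at hc
          norm_num at hc
      · intro hc
        refine ⟨c, hc, ?_⟩
        obtain ⟨hclo, hmem, hsub⟩ := (clopen_base hU hc).choose_spec
        erw [idxFun_inl, chi_of_mem hmem]
        norm_num

end RC

end RCaux

/-- The plank `𝔸` is realcompact. -/
theorem statement16 : Realcompact Aplank := by
  refine ⟨RC.Idx, RC.idxFun, ?_⟩
  exact ⟨⟨RC.isInducing_idxFun, RC.injective_idxFun⟩, RC.isClosed_range_idxFun⟩
end

section
/- The set C(𝔸, ℝ) of all continuous real-valued functions on the plank 𝔸 has cardinality exactly 𝔠 = 2^{ℵ₀}, the cardinality of the continuum. -/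
open Set Topology

/- ### auxiliary development -/

/-- the point `(a, s)` of `Λ × D ⊆ 𝔸`. -/
def toA (a : Lam) (s : D) : Aplank := ⟨(a, stoneCechUnit s), Or.inl ⟨s, rfl⟩⟩

lemma continuous_toA (s : D) : Continuous fun a : Lam => toA a s :=
  (continuous_id.prodMk continuous_const).subtype_mk _

/-- the restriction of `f` to `Λ × D`. -/
def Ff (f : C(Aplank, ℝ)) : Lam → D → ℝ := fun a s => f (toA a s)

/-- A continuous real function on `Λ` is equal to its value at `∞` off a countable set. -/
lemma countable_col (g : Lam → ℝ) (hg : Continuous g) :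
    {x : ℕ → Bool | g (Lam.mk x) ≠ g Lam.infty}.Countable := by
  have key : ∀ m : ℕ, {x : ℕ → Bool |
      Lam.mk x ∉ g ⁻¹' (Metric.ball (g Lam.infty) (1 / (m + 1)))}.Countable := by
    intro m
    have hU : IsOpen (g ⁻¹' (Metric.ball (g Lam.infty) (1 / (m + 1)))) :=
      hg.isOpen_preimage _ Metric.isOpen_ball
    exact hU (by
      simp only [Set.mem_preimage, Metric.mem_ball, dist_self]
      positivity)
  refine (Set.countable_iUnion key).mono ?_
  intro x hx
  have hd : 0 < dist (g (Lam.mk x)) (g Lam.infty) := dist_pos.2 hx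
  obtain ⟨m, hm⟩ := exists_nat_one_div_lt hd
  exact Set.mem_iUnion.2 ⟨m, fun h => absurd (Metric.mem_ball.1 h) (not_lt.2 hm.le)⟩

/-- The exceptional set of `f` is countable. -/
lemma countable_exc (f : C(Aplank, ℝ)) :
    {x : ℕ → Bool | Ff f (Lam.mk x) ≠ Ff f Lam.infty}.Countable := by
  have : ∀ s : D, {x : ℕ → Bool | Ff f (Lam.mk x) s ≠ Ff f Lam.infty s}.Countable := by
    intro s
    exact countable_col (fun a => f (toA a s)) (f.continuous.comp (continuous_toA s))
  refine (Set.countable_iUnion this).mono ?_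
  intro x hx
  have : ∃ s : D, Ff f (Lam.mk x) s ≠ Ff f Lam.infty s := by
    by_contra h
    push_neg at h
    exact hx (funext h)
  obtain ⟨s, hs⟩ := this
  exact Set.mem_iUnion.2 ⟨s, hs⟩

/-- an enumeration of the exceptional set -/
noncomputable def uf (f : C(Aplank, ℝ)) : ℕ → Option (ℕ → Bool) := by
  have hc : (insert none (Option.some ''
      {x : ℕ → Bool | Ff f (Lam.mk x) ≠ Ff f Lam.infty}) :
      Set (Option (ℕ → Bool))).Countable :=
    ((countable_exc f).image _).insert _
  exact (hc.exists_eq_range ⟨none, Set.mem_insert _ _⟩).choose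

lemma uf_spec (f : C(Aplank, ℝ)) {x : ℕ → Bool}
    (hx : Ff f (Lam.mk x) ≠ Ff f Lam.infty) : ∃ n, uf f n = some x := by
  have hc : (insert none (Option.some ''
      {x : ℕ → Bool | Ff f (Lam.mk x) ≠ Ff f Lam.infty}) :
      Set (Option (ℕ → Bool))).Countable :=
    ((countable_exc f).image _).insert _
  have h := (hc.exists_eq_range ⟨none, Set.mem_insert _ _⟩).choose_spec
  have : (some x : Option (ℕ → Bool)) ∈ Set.range (uf f) := by
    rw [uf]; rw [← h]
    exact Set.mem_insert_of_mem _ ⟨x, hx, rfl⟩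
  obtain ⟨n, hn⟩ := this
  exact ⟨n, hn⟩

/-- the encoding map -/
noncomputable def enc (f : C(Aplank, ℝ)) :
    (D → ℝ) × (ℕ → Option ((ℕ → Bool) × (D → ℝ))) :=
  (Ff f Lam.infty, fun n => (uf f n).map fun x => (x, Ff f (Lam.mk x)))

lemma dense_LD : Dense {p : Aplank | ∃ s : D, (p : Lam × betaD).2 = stoneCechUnit s} := by
  intro p
  rw [mem_closure_iff]
  intro O hO hpO
  rw [isOpen_induced_iff] at hO
  obtain ⟨O', hO', rfl⟩ := hO
  obtain ⟨U, V, hU, hV, hpU, hpV, hUV⟩ := isOpen_prod_iff.1 hO' p.val.1 p.val.2 hpO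
  obtain ⟨s, hsV⟩ := denseRange_stoneCechUnit.exists_mem_open hV ⟨_, hpV⟩
  refine ⟨toA p.val.1 s, ?_, s, rfl⟩
  show (toA p.val.1 s).val ∈ O'
  exact hUV (Set.mk_mem_prod hpU hsV)

lemma enc_injective : Function.Injective enc := by
  intro f g h
  have h1 : Ff f Lam.infty = Ff g Lam.infty := congrArg Prod.fst h
  have h2 : ∀ n, (uf f n).map (fun x => (x, Ff f (Lam.mk x))) =
      (uf g n).map fun x => (x, Ff g (Lam.mk x)) := fun n => congrFun (congrArg Prod.snd h) n
  -- values of enumerations are honest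
  have hval : ∀ (φ : C(Aplank, ℝ)) n x v,
      ((uf φ n).map fun y => (y, Ff φ (Lam.mk y))) = some (x, v) → Ff φ (Lam.mk x) = v := by
    intro φ n x v hv
    cases hu : uf φ n with
    | none => rw [hu] at hv; simp at hv
    | some y =>
      rw [hu] at hv
      simp only [Option.map_some] at hv
      obtain ⟨hy, hvv⟩ := Prod.mk.injEq .. ▸ Option.some.injEq _ _ ▸ hv
      exact hy ▸ hvv
  have hFf : Ff f = Ff g := by
    funext a
    cases a with
    | none => exact h1
    | some x =>
      show Ff f (Lam.mk x) = Ff g (Lam.mk x)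
      by_cases hf : Ff f (Lam.mk x) = Ff f Lam.infty
      · by_cases hgx : Ff g (Lam.mk x) = Ff g Lam.infty
        · rw [hf, hgx, h1]
        · obtain ⟨n, hn⟩ := uf_spec g hgx
          have : ((uf f n).map fun y => (y, Ff f (Lam.mk y))) = some (x, Ff g (Lam.mk x)) := by
            rw [h2 n, hn]; simp
          exact hval f n x _ this
      · obtain ⟨n, hn⟩ := uf_spec f hf
        have : ((uf g n).map fun y => (y, Ff g (Lam.mk y))) = some (x, Ff f (Lam.mk x)) := by
          rw [← h2 n, hn]; simp
        exact (hval g n x _ this).symm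
  refine ContinuousMap.ext_iff.2 (congrFun ?_)
  refine Continuous.ext_on dense_LD f.continuous g.continuous ?_
  rintro p ⟨s, hs⟩
  have hp : p = toA p.val.1 s := Subtype.ext (Prod.ext rfl hs)
  rw [hp]
  exact congrFun (congrFun hFf p.val.1) s

/-- The set `C(𝔸, ℝ)` of continuous real-valued functions on the plank `𝔸`
has cardinality exactly `𝔠 = 2^{ℵ₀}`. -/
theorem statement17 : Cardinal.mk C(Aplank, ℝ) = Cardinal.continuum := by
  apply le_antisymm
  · calc Cardinal.mk C(Aplank, ℝ)
        ≤ Cardinal.mk ((D → ℝ) × (ℕ → Option ((ℕ → Bool) × (D → ℝ)))) :=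
          Cardinal.mk_le_of_injective enc_injective
      _ = Cardinal.continuum := by
          have hD : Cardinal.mk D = Cardinal.aleph0 := Cardinal.mk_list_eq_aleph0 Bool
          have hDR : Cardinal.mk (D → ℝ) = Cardinal.continuum := by
            rw [Cardinal.mk_arrow, Cardinal.lift_id, Cardinal.lift_id, hD, Cardinal.mk_real,
              Cardinal.continuum_power_aleph0]
          have h2 : Cardinal.mk ((ℕ → Bool) × (D → ℝ)) = Cardinal.continuum := by
            rw [Cardinal.mk_prod, Cardinal.lift_id, Cardinal.lift_id, hDR]
            rw [show Cardinal.mk (ℕ → Bool) = Cardinal.continuum by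
              rw [Cardinal.mk_arrow, Cardinal.lift_id, Cardinal.lift_id, Cardinal.mk_bool,
                Cardinal.mk_nat, Cardinal.continuum, Cardinal.two_power_aleph0]]
            exact Cardinal.mul_eq_self Cardinal.aleph0_le_continuum
          have h3 : Cardinal.mk (Option ((ℕ → Bool) × (D → ℝ))) = Cardinal.continuum := by
            rw [Cardinal.mk_option, h2, Cardinal.add_one_eq Cardinal.aleph0_le_continuum]
          have h4 : Cardinal.mk (ℕ → Option ((ℕ → Bool) × (D → ℝ))) = Cardinal.continuum := by
            rw [Cardinal.mk_arrow, Cardinal.lift_id, Cardinal.lift_id, h3, Cardinal.mk_nat,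
              Cardinal.continuum_power_aleph0]
          rw [Cardinal.mk_prod, Cardinal.lift_id, Cardinal.lift_id, hDR, h4,
            Cardinal.mul_eq_self Cardinal.aleph0_le_continuum]
  · refine Cardinal.mk_real ▸ Cardinal.mk_le_of_injective
      (f := fun r : ℝ => (ContinuousMap.const Aplank r : C(Aplank, ℝ))) ?_
    intro a b hab
    simpa using ContinuousMap.ext_iff.1 hab (AmkR [])
end
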